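/- arXiv:2112.11144 — 2 statements merged into one kernel-verified Lean document; each statement's English description precedes it below -/
import Mathlib

section
/- For all positive integers a and b there exists n₀ such that for every n ≥ n₀ there is an integer m with 1 ≤ m ≤ n−1 such that ex(n, S_{a,b}, K₃) = N(S_{a,b}, K_{m,n−m}); that is, the double star S_{a,b} is weakly K₃-Turán-good. -/
open SimpleGraph

/-- The number of subgraphs of `G` isomorphic to `H`. -/
noncomputable def copyCount {α β : Type*} (H : SimpleGraph α) (G : SimpleGraph β) : ℕ :=
  Set.ncard {G' : G.Subgraph | Nonempty (H ≃g G'.coe)}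

/-- `G` contains a subgraph isomorphic to `F`. -/
def Contains {α β : Type*} (F : SimpleGraph α) (G : SimpleGraph β) : Prop :=
  ∃ f : F →g G, Function.Injective f

/-- The generalized Turán number `ex(n, H, F)`: the maximum number of subgraphs
isomorphic to `H` in an `F`-free graph on `n` vertices. -/
noncomputable def exGen {α β : Type*} (n : ℕ) (H : SimpleGraph α) (F : SimpleGraph β) : ℕ :=
  sSup {N | ∃ G : SimpleGraph (Fin n), ¬ Contains F G ∧ N = copyCount H G}

/-- The double star `S_{a,b}`: central edge `0-1`, vertices `2,…,a+1` are leaves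
attached to `0`, and vertices `a+2,…,a+b+1` are leaves attached to `1`. -/
def doubleStar (a b : ℕ) : SimpleGraph (Fin (a + b + 2)) :=
  SimpleGraph.fromRel (fun x y =>
    (x.val = 0 ∧ y.val = 1) ∨ (x.val = 0 ∧ 2 ≤ y.val ∧ y.val < a + 2) ∨
      (x.val = 1 ∧ a + 2 ≤ y.val))
-- ############ basic invariance lemmas ############
section basics
variable {α β γ : Type*} {H : SimpleGraph α} {H' : SimpleGraph β} {G : SimpleGraph γ}

lemma copyCount_congr_left (e : H ≃g H') (G : SimpleGraph γ) :
    _root_.copyCount H G = _root_.copyCount H' G := by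
  unfold _root_.copyCount
  congr 1
  ext G'
  exact ⟨fun ⟨f⟩ => ⟨e.symm.trans f⟩, fun ⟨f⟩ => ⟨e.trans f⟩⟩

lemma contains_congr (e : H' ≃g G) : Contains H H' ↔ Contains H G := by
  constructor
  · rintro ⟨f, hf⟩
    exact ⟨e.toHom.comp f, fun x y h => hf (by
      have := congrArg e.symm h
      simpa using this)⟩
  · rintro ⟨f, hf⟩
    exact ⟨e.symm.toHom.comp f, fun x y h => hf (by
      have := congrArg e h
      simpa using this)⟩
end basics

-- _root_.copyCount invariance under iso of ambient graph
section copyiso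
variable {β γ : Type*} {α : Type*} (H : SimpleGraph α) {G : SimpleGraph β} {G' : SimpleGraph γ}

/-- map a subgraph along an iso -/
def subgraphMap (e : G ≃g G') (s : G.Subgraph) : G'.Subgraph where
  verts := e '' s.verts
  Adj x y := s.Adj (e.symm x) (e.symm y)
  adj_sub := fun {x y} h => by
    have := s.adj_sub h
    have h2 : G'.Adj (e (e.symm x)) (e (e.symm y)) := e.map_adj_iff.mpr this
    simpa using h2
  edge_vert := fun {x y} h => ⟨e.symm x, s.edge_vert h, by simp⟩
  symm := ⟨fun x y h => s.adj_symm h⟩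

/-- the coe of mapped subgraph is isomorphic to coe of original -/
noncomputable def subgraphMapCoeIso (e : G ≃g G') (s : G.Subgraph) :
    s.coe ≃g (subgraphMap e s).coe where
  toFun x := ⟨e x.1, ⟨x.1, x.2, rfl⟩⟩
  invFun y := ⟨e.symm y.1, by
    obtain ⟨x, hx, hxe⟩ := y.2
    rw [← hxe]; simpa using hx⟩
  left_inv x := by ext; simp
  right_inv y := by ext; simp
  map_rel_iff' := by
    intro x y
    simp only [SimpleGraph.Subgraph.coe_adj]
    show (subgraphMap e s).Adj _ _ ↔ _
    simp [subgraphMap]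
    exact (by simp : s.Adj (e.symm (e x.1)) (e.symm (e y.1)) ↔ s.Adj x.1 y.1)

lemma copyCount_congr_right (e : G ≃g G') : _root_.copyCount H G = _root_.copyCount H G' := by
  unfold _root_.copyCount
  have hbij : Set.BijOn (fun s => subgraphMap e s)
      {s : G.Subgraph | Nonempty (H ≃g s.coe)}
      {t : G'.Subgraph | Nonempty (H ≃g t.coe)} := by
    refine ⟨fun s hs => ?_, fun s hs t ht hst => ?_, fun t ht => ?_⟩
    · obtain ⟨f⟩ := hs
      exact ⟨f.trans (subgraphMapCoeIso e s)⟩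
    · -- injectivity
      simp only [] at hst
      ext x
      · constructor
        · intro hx
          have : e x ∈ (subgraphMap e s).verts := ⟨x, hx, rfl⟩
          rw [hst] at this
          obtain ⟨y, hy, hye⟩ := this
          have : y = x := e.toEquiv.injective hye
          subst this; exact hy
        · intro hx
          have : e x ∈ (subgraphMap e t).verts := ⟨x, hx, rfl⟩
          rw [← hst] at this
          obtain ⟨y, hy, hye⟩ := this
          have : y = x := e.toEquiv.injective hye
          subst this; exact hy
      · rename_i y
        constructor
        · intro hx
          have : (subgraphMap e s).Adj (e x) (e y) := by
            show s.Adj (e.symm (e x)) (e.symm (e y)); simpa using hx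
          rw [hst] at this
          simpa [subgraphMap] using this
        · intro hx
          have : (subgraphMap e t).Adj (e x) (e y) := by
            show t.Adj (e.symm (e x)) (e.symm (e y)); simpa using hx
          rw [← hst] at this
          simpa [subgraphMap] using this
    · obtain ⟨f⟩ := ht
      refine ⟨subgraphMap e.symm t, ⟨f.trans (subgraphMapCoeIso e.symm t)⟩, ?_⟩
      ext x
      · constructor
        · rintro ⟨y, hy, rfl⟩
          obtain ⟨z, hz, rfl⟩ := hy
          simpa using hz
        · intro hx
          exact ⟨e.symm x, ⟨x, hx, rfl⟩, by simp⟩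
      · rename_i y
        show t.Adj _ _ ↔ t.Adj x y
        simp
  exact Set.ncard_image_of_injOn hbij.injOn ▸ (by rw [hbij.image_eq])
end copyiso

-- ############ model double star ############
abbrev Vt (a b : ℕ) := Bool ⊕ (Fin a ⊕ Fin b)

def dsRel (a b : ℕ) : Vt a b → Vt a b → Prop := fun p q =>
  match p, q with
  | Sum.inl false, Sum.inl true => True
  | Sum.inl false, Sum.inr (Sum.inl _) => True
  | Sum.inl true, Sum.inr (Sum.inr _) => True
  | _, _ => False

def DS (a b : ℕ) : SimpleGraph (Vt a b) := SimpleGraph.fromRel (dsRel a b)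

@[simp] lemma dsadj1 (a b : ℕ) (i : Fin a) : (DS a b).Adj (Sum.inl false) (Sum.inr (Sum.inl i)) := by
  rw [DS, fromRel_adj]; exact ⟨by simp, Or.inl trivial⟩
@[simp] lemma dsadj2 (a b : ℕ) (j : Fin b) : (DS a b).Adj (Sum.inl true) (Sum.inr (Sum.inr j)) := by
  rw [DS, fromRel_adj]; exact ⟨by simp, Or.inl trivial⟩
@[simp] lemma dsadj0 (a b : ℕ) : (DS a b).Adj (Sum.inl false) (Sum.inl true) := by
  rw [DS, fromRel_adj]; exact ⟨by simp, Or.inl trivial⟩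

lemma dsadj_iff (a b : ℕ) (p q : Vt a b) : (DS a b).Adj p q ↔
    ((p = Sum.inl false ∧ q = Sum.inl true) ∨ (q = Sum.inl false ∧ p = Sum.inl true) ∨
     (p = Sum.inl false ∧ ∃ i, q = Sum.inr (Sum.inl i)) ∨
     (q = Sum.inl false ∧ ∃ i, p = Sum.inr (Sum.inl i)) ∨
     (p = Sum.inl true ∧ ∃ j, q = Sum.inr (Sum.inr j)) ∨
     (q = Sum.inl true ∧ ∃ j, p = Sum.inr (Sum.inr j))) := by
  rw [DS, fromRel_adj]
  constructor
  · rintro ⟨hne, h | h⟩ <;>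
    · rcases p with (_|_) | (i|j) <;> rcases q with (_|_) | (i'|j') <;>
        simp_all [dsRel] <;> rename_i x _ <;> cases x <;> simp_all
  · rintro (⟨rfl, rfl⟩ | ⟨rfl, rfl⟩ | ⟨rfl, i, rfl⟩ | ⟨rfl, i, rfl⟩ | ⟨rfl, j, rfl⟩ | ⟨rfl, j, rfl⟩) <;>
      refine ⟨by simp, ?_⟩ <;> simp [dsRel]

-- the equivalence Fin (a+b+2) ≃ Vt a b
def vtEquiv (a b : ℕ) : Fin (a + b + 2) ≃ Vt a b where
  toFun k :=
    if h0 : k.val = 0 then Sum.inl false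
    else if h1 : k.val = 1 then Sum.inl true
    else if hk : k.val < a + 2 then Sum.inr (Sum.inl ⟨k.val - 2, by omega⟩)
    else Sum.inr (Sum.inr ⟨k.val - (a + 2), by have := k.isLt; omega⟩)
  invFun p :=
    match p with
    | Sum.inl false => ⟨0, by omega⟩
    | Sum.inl true => ⟨1, by omega⟩
    | Sum.inr (Sum.inl i) => ⟨2 + i.val, by have := i.isLt; omega⟩
    | Sum.inr (Sum.inr j) => ⟨a + 2 + j.val, by have := j.isLt; omega⟩
  left_inv k := by
    by_cases h0 : k.val = 0
    · simp only [h0, dif_pos]; exact Fin.ext (by simp [h0])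
    by_cases h1 : k.val = 1
    · simp only [h0, h1, dif_neg, dif_pos, not_false_iff]; exact Fin.ext (by simp [h1])
    by_cases h2 : k.val < a + 2
    · simp only [h0, h1, h2, dif_neg, dif_pos, not_false_iff]; exact Fin.ext (by simp; omega)
    · simp only [h0, h1, h2, dif_neg, not_false_iff]; exact Fin.ext (by simp; omega)
  right_inv p := by
    rcases p with (_|_) | (i|j)
    · rfl
    · rfl
    · show (if h0 : 2 + i.val = 0 then _ else if _ : 2 + i.val = 1 then _ else
        if hk : 2 + i.val < a + 2 then _ else _) = _
      have h0 : ¬ (2 + i.val = 0) := by omega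
      have h1 : ¬ (2 + i.val = 1) := by omega
      have h2 : 2 + i.val < a + 2 := by have := i.isLt; omega
      simp only [h0, h1, h2, dif_neg, dif_pos, not_false_iff]
      congr 1; congr 1; exact Fin.ext (by simp)
    · show (if h0 : a + 2 + j.val = 0 then _ else if _ : a + 2 + j.val = 1 then _ else
        if hk : a + 2 + j.val < a + 2 then _ else _) = _
      have h0 : ¬ (a + 2 + j.val = 0) := by omega
      have h1 : ¬ (a + 2 + j.val = 1) := by omega
      have h2 : ¬ (a + 2 + j.val < a + 2) := by omega
      simp only [h0, h1, h2, dif_neg, not_false_iff]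
      congr 1; congr 1; exact Fin.ext (by simp)

def dsIso (a b : ℕ) : doubleStar a b ≃g DS a b := by
  have key : ∀ p q : Vt a b, (DS a b).Adj p q ↔
      (doubleStar a b).Adj ((vtEquiv a b).symm p) ((vtEquiv a b).symm q) := by
    intro p q
    rw [dsadj_iff]
    rcases p with (_|_) | (i|j) <;> rcases q with (_|_) | (i'|j') <;>
      simp [doubleStar, fromRel_adj, vtEquiv, Fin.ext_iff, -Fin.val_eq_zero_iff] <;> omega
  exact RelIso.mk (vtEquiv a b) (by
    intro x y
    rw [key]
    simp)
-- ############ counting machinery ############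
section counting
open Finset
variable {V : Type*} [Fintype V] [DecidableEq V]

/-- triangle-free predicate -/
def TF {W : Type*} (G : SimpleGraph W) : Prop := ∀ ⦃x y z : W⦄, G.Adj x y → G.Adj x z → G.Adj y z → False

variable (a b : ℕ) (G : SimpleGraph V) [DecidableRel G.Adj]

def tupleCond (t : (V × V) × Finset V × Finset V) : Prop :=
  G.Adj t.1.1 t.1.2 ∧ t.2.1 ⊆ G.neighborFinset t.1.1 \ {t.1.2} ∧ t.2.1.card = a ∧
    t.2.2 ⊆ G.neighborFinset t.1.2 \ {t.1.1} ∧ t.2.2.card = b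

instance : DecidablePred (tupleCond a b G) := fun _ => by unfold tupleCond; infer_instance

def TT : Finset ((V × V) × Finset V × Finset V) := Finset.univ.filter (tupleCond a b G)

variable {a b G}

namespace tupleCond

variable {t : (V × V) × Finset V × Finset V} (htf : TF G) (ht : tupleCond a b G t)

include ht

lemma huv : G.Adj t.1.1 t.1.2 := ht.1
lemma hne : t.1.1 ≠ t.1.2 := G.ne_of_adj ht.1
lemma hAn : ∀ x ∈ t.2.1, G.Adj t.1.1 x := fun x hx => by
  have := ht.2.1 hx; rw [Finset.mem_sdiff, SimpleGraph.mem_neighborFinset] at this; exact this.1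
lemma hBn : ∀ x ∈ t.2.2, G.Adj t.1.2 x := fun x hx => by
  have := ht.2.2.2.1 hx; rw [Finset.mem_sdiff, SimpleGraph.mem_neighborFinset] at this; exact this.1
lemma hAv : t.1.2 ∉ t.2.1 := fun hx => by
  have := ht.2.1 hx; rw [Finset.mem_sdiff] at this; simp at this
lemma hBu : t.1.1 ∉ t.2.2 := fun hx => by
  have := ht.2.2.2.1 hx; rw [Finset.mem_sdiff] at this; simp at this
lemma hAu : t.1.1 ∉ t.2.1 := fun hx => G.irrefl (ht.hAn _ hx)
lemma hBv : t.1.2 ∉ t.2.2 := fun hx => G.irrefl (ht.hBn _ hx)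
lemma cardA : t.2.1.card = a := ht.2.2.1
lemma cardB : t.2.2.card = b := ht.2.2.2.2

include htf
lemma hAB : ∀ x, x ∈ t.2.1 → x ∈ t.2.2 → False := fun x hxA hxB =>
  htf (ht.hAn _ hxA) (ht.huv) (G.adj_symm (ht.hBn _ hxB))

end tupleCond

/-- the subgraph associated to a valid tuple -/
def tupSub {t : (V × V) × Finset V × Finset V} (ht : tupleCond a b G t) : G.Subgraph where
  verts := ({t.1.1, t.1.2} : Set V) ∪ ↑t.2.1 ∪ ↑t.2.2
  Adj x y :=
    (x = t.1.1 ∧ y = t.1.2) ∨ (x = t.1.2 ∧ y = t.1.1) ∨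
    (x = t.1.1 ∧ y ∈ t.2.1) ∨ (y = t.1.1 ∧ x ∈ t.2.1) ∨
    (x = t.1.2 ∧ y ∈ t.2.2) ∨ (y = t.1.2 ∧ x ∈ t.2.2)
  adj_sub := by
    rintro x y (⟨rfl, rfl⟩ | ⟨rfl, rfl⟩ | ⟨rfl, h⟩ | ⟨rfl, h⟩ | ⟨rfl, h⟩ | ⟨rfl, h⟩)
    · exact ht.huv
    · exact G.adj_symm ht.huv
    · exact ht.hAn _ h
    · exact G.adj_symm (ht.hAn _ h)
    · exact ht.hBn _ h
    · exact G.adj_symm (ht.hBn _ h)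
  edge_vert := by
    rintro x y (⟨rfl, rfl⟩ | ⟨rfl, rfl⟩ | ⟨rfl, h⟩ | ⟨rfl, h⟩ | ⟨rfl, h⟩ | ⟨rfl, h⟩) <;>
      simp [*]
  symm := by
    constructor
    rintro x y (⟨rfl, rfl⟩ | ⟨rfl, rfl⟩ | ⟨rfl, h⟩ | ⟨rfl, h⟩ | ⟨rfl, h⟩ | ⟨rfl, h⟩) <;> tauto

end counting
-- ############ tuple → copy ############
section tupiso
open Finset
variable {V : Type*} [Fintype V] [DecidableEq V] {a b : ℕ} {G : SimpleGraph V} [DecidableRel G.Adj]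
variable {t : (V × V) × Finset V × Finset V}

noncomputable def eqA {n : ℕ} (s : Finset V) (h : s.card = n) : {x // x ∈ s} ≃ Fin n :=
  s.equivFin.trans (finCongr h)

/-- underlying vertex map of the iso -/
noncomputable def tupFun (ht : tupleCond a b G t) : Vt a b → V
  | Sum.inl false => t.1.1
  | Sum.inl true => t.1.2
  | Sum.inr (Sum.inl i) => ((eqA t.2.1 ht.cardA).symm i).1
  | Sum.inr (Sum.inr j) => ((eqA t.2.2 ht.cardB).symm j).1

lemma tupFun_mem (ht : tupleCond a b G t) (p : Vt a b) : tupFun ht p ∈ (tupSub ht).verts := by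
  rcases p with (_|_) | (i|j)
  · show _ ∈ (({t.1.1, t.1.2} : Set V) ∪ ↑t.2.1 ∪ ↑t.2.2); simp [tupFun]
  · show _ ∈ (({t.1.1, t.1.2} : Set V) ∪ ↑t.2.1 ∪ ↑t.2.2); simp [tupFun]
  · show _ ∈ (({t.1.1, t.1.2} : Set V) ∪ ↑t.2.1 ∪ ↑t.2.2)
    exact Or.inl (Or.inr (((eqA t.2.1 ht.cardA).symm i).2))
  · show _ ∈ (({t.1.1, t.1.2} : Set V) ∪ ↑t.2.1 ∪ ↑t.2.2)
    exact Or.inr (((eqA t.2.2 ht.cardB).symm j).2)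

lemma tupFun_inj (htf : TF G) (ht : tupleCond a b G t) : Function.Injective (tupFun ht) := by
  have sA : ∀ i, ((eqA t.2.1 ht.cardA).symm i).1 ∈ t.2.1 := fun i => ((eqA t.2.1 ht.cardA).symm i).2
  have sB : ∀ j, ((eqA t.2.2 ht.cardB).symm j).1 ∈ t.2.2 := fun j => ((eqA t.2.2 ht.cardB).symm j).2
  intro p q h
  rcases p with (_|_) | (i|j) <;> rcases q with (_|_) | (i'|j') <;>
    simp only [tupFun] at h
  · rfl
  · exact absurd h (ht.hne)
  · exact absurd (h ▸ sA i') (h ▸ ht.hAu)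
  · exact absurd (h ▸ sB j') (h ▸ ht.hBu)
  · exact absurd h.symm (ht.hne)
  · rfl
  · exact absurd (h ▸ sA i') (h ▸ ht.hAv)
  · exact absurd (h ▸ sB j') (h ▸ ht.hBv)
  · exact absurd (h.symm ▸ sA i) (h.symm ▸ ht.hAu)
  · exact absurd (h.symm ▸ sA i) (h.symm ▸ ht.hAv)
  · have : (eqA t.2.1 ht.cardA).symm i = (eqA t.2.1 ht.cardA).symm i' := Subtype.ext h
    rw [(eqA t.2.1 ht.cardA).symm.injective this]
  · exact absurd trivial (fun _ => ht.hAB htf _ (sA i) (h ▸ sB j'))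
  · exact absurd (h.symm ▸ sB j) (h.symm ▸ ht.hBu)
  · exact absurd (h.symm ▸ sB j) (h.symm ▸ ht.hBv)
  · exact absurd trivial (fun _ => ht.hAB htf _ (h ▸ sA i') (sB j))
  · have : (eqA t.2.2 ht.cardB).symm j = (eqA t.2.2 ht.cardB).symm j' := Subtype.ext h
    rw [(eqA t.2.2 ht.cardB).symm.injective this]

lemma tupFun_surj (htf : TF G) (ht : tupleCond a b G t) (x : V) (hx : x ∈ (tupSub ht).verts) :
    ∃ p, tupFun ht p = x := by
  rcases hx with ((h | h) | h) | h
  · exact ⟨Sum.inl false, h.symm⟩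
  · exact ⟨Sum.inl true, h.symm⟩
  · refine ⟨Sum.inr (Sum.inl ((eqA t.2.1 ht.cardA) ⟨x, h⟩)), ?_⟩
    simp [tupFun]
  · refine ⟨Sum.inr (Sum.inr ((eqA t.2.2 ht.cardB) ⟨x, h⟩)), ?_⟩
    simp [tupFun]

noncomputable def tupEquiv (htf : TF G) (ht : tupleCond a b G t) : Vt a b ≃ ↥(tupSub ht).verts :=
  Equiv.ofBijective (fun p => ⟨tupFun ht p, tupFun_mem ht p⟩)
    ⟨fun p q h => tupFun_inj htf ht (congrArg Subtype.val h),
     fun x => by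
      obtain ⟨p, hp⟩ := tupFun_surj htf ht x.1 x.2
      exact ⟨p, Subtype.ext hp⟩⟩

@[simp] lemma tupEquiv_val (htf : TF G) (ht : tupleCond a b G t) (p : Vt a b) :
    (tupEquiv htf ht p : V) = tupFun ht p := rfl

noncomputable def tupIso (htf : TF G) (ht : tupleCond a b G t) : DS a b ≃g (tupSub ht).coe := by
  have sA : ∀ i, ((eqA t.2.1 ht.cardA).symm i).1 ∈ t.2.1 := fun i => ((eqA t.2.1 ht.cardA).symm i).2
  have sB : ∀ j, ((eqA t.2.2 ht.cardB).symm j).1 ∈ t.2.2 := fun j => ((eqA t.2.2 ht.cardB).symm j).2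
  refine RelIso.mk (tupEquiv htf ht) ?_
  intro p q
  rw [SimpleGraph.Subgraph.coe_adj]
  rw [tupEquiv_val, tupEquiv_val]
  have hadj : ∀ x y, (tupSub ht).Adj x y ↔
      ((x = t.1.1 ∧ y = t.1.2) ∨ (x = t.1.2 ∧ y = t.1.1) ∨
      (x = t.1.1 ∧ y ∈ t.2.1) ∨ (y = t.1.1 ∧ x ∈ t.2.1) ∨
      (x = t.1.2 ∧ y ∈ t.2.2) ∨ (y = t.1.2 ∧ x ∈ t.2.2)) := fun x y => Iff.rfl
  have hne := ht.hne
  have hAu := ht.hAu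
  have hAv := ht.hAv
  have hBu := ht.hBu
  have hBv := ht.hBv
  have hAB := ht.hAB htf
  have hia : ∀ i : Fin a, ((eqA t.2.1 ht.cardA).symm i).1 ≠ t.1.1 :=
    fun i h => hAu (h ▸ sA i)
  have hia' : ∀ i : Fin a, ((eqA t.2.1 ht.cardA).symm i).1 ≠ t.1.2 :=
    fun i h => hAv (h ▸ sA i)
  have hjb : ∀ j : Fin b, ((eqA t.2.2 ht.cardB).symm j).1 ≠ t.1.1 :=
    fun j h => hBu (h ▸ sB j)
  have hjb' : ∀ j : Fin b, ((eqA t.2.2 ht.cardB).symm j).1 ≠ t.1.2 :=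
    fun j h => hBv (h ▸ sB j)
  have hiaB : ∀ i : Fin a, ((eqA t.2.1 ht.cardA).symm i).1 ∉ t.2.2 :=
    fun i h => hAB _ (sA i) h
  have hjbA : ∀ j : Fin b, ((eqA t.2.2 ht.cardB).symm j).1 ∉ t.2.1 :=
    fun j h => hAB _ h (sB j)
  rcases p with (_|_) | (i|j) <;> rcases q with (_|_) | (i'|j') <;>
    simp_all [tupFun, hadj, dsadj_iff, hne.symm, (Subtype.ext_iff (p := fun x => x ∈ t.2.1)),
      (eqA t.2.1 ht.cardA).symm.injective.eq_iff, (eqA t.2.2 ht.cardB).symm.injective.eq_iff]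
end tupiso
-- ############ copy → tuple ############
section extract
open Finset
variable {V : Type*} [Fintype V] [DecidableEq V] {a b : ℕ} {G : SimpleGraph V} [DecidableRel G.Adj]
variable {G' : G.Subgraph}

noncomputable def extractTup (f : DS a b ≃g G'.coe) : (V × V) × Finset V × Finset V :=
  (((f (Sum.inl false) : V), (f (Sum.inl true) : V)),
   (Finset.univ.image (fun i : Fin a => (f (Sum.inr (Sum.inl i)) : V)),
    Finset.univ.image (fun j : Fin b => (f (Sum.inr (Sum.inr j)) : V))))

lemma extract_val_inj (f : DS a b ≃g G'.coe) {p q : Vt a b}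
    (h : (f p : V) = (f q : V)) : p = q :=
  f.toEquiv.injective (Subtype.ext h)

lemma extract_adj (f : DS a b ≃g G'.coe) {p q : Vt a b} (h : (DS a b).Adj p q) :
    G'.Adj (f p : V) (f q : V) := by
  have := f.map_rel_iff'.mpr h
  rwa [SimpleGraph.Subgraph.coe_adj] at this

lemma extract_cond (f : DS a b ≃g G'.coe) : tupleCond a b G (extractTup f) := by
  have huv : G'.Adj (f (Sum.inl false) : V) (f (Sum.inl true) : V) :=
    extract_adj f (dsadj0 a b)
  refine ⟨G'.adj_sub huv, ?_, ?_, ?_, ?_⟩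
  · intro x hx
    simp only [extractTup, Finset.mem_image, Finset.mem_univ, true_and] at hx
    obtain ⟨i, rfl⟩ := hx
    have hadj : G'.Adj (f (Sum.inl false) : V) (f (Sum.inr (Sum.inl i)) : V) :=
      extract_adj f (dsadj1 a b i)
    rw [Finset.mem_sdiff, SimpleGraph.mem_neighborFinset]
    refine ⟨G'.adj_sub hadj, ?_⟩
    simp only [Finset.mem_singleton]
    intro h
    exact absurd (extract_val_inj f h) (by simp)
  · have hrw : (extractTup f).2.1 = Finset.univ.image (fun i : Fin a => (f (Sum.inr (Sum.inl i)) : V)) := rfl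
    rw [hrw, Finset.card_image_of_injective _ (fun i i' h => by
      have := extract_val_inj (f := f) h; simpa using this)]
    simp
  · intro x hx
    simp only [extractTup, Finset.mem_image, Finset.mem_univ, true_and] at hx
    obtain ⟨j, rfl⟩ := hx
    have hadj : G'.Adj (f (Sum.inl true) : V) (f (Sum.inr (Sum.inr j)) : V) :=
      extract_adj f (dsadj2 a b j)
    rw [Finset.mem_sdiff, SimpleGraph.mem_neighborFinset]
    refine ⟨G'.adj_sub hadj, ?_⟩
    simp only [Finset.mem_singleton]
    intro h
    exact absurd (extract_val_inj f h) (by simp)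
  · have hrw : (extractTup f).2.2 = Finset.univ.image (fun j : Fin b => (f (Sum.inr (Sum.inr j)) : V)) := rfl
    rw [hrw, Finset.card_image_of_injective _ (fun j j' h => by
      have := extract_val_inj (f := f) h; simpa using this)]
    simp

lemma extract_eq (f : DS a b ≃g G'.coe) : tupSub (extract_cond f) = G' := by
  have hval : ∀ x, x ∈ G'.verts → ∃ p : Vt a b, (f p : V) = x := by
    intro x hx
    obtain ⟨p, hp⟩ := f.toEquiv.surjective ⟨x, hx⟩
    exact ⟨p, congrArg Subtype.val hp⟩
  ext x y
  · constructor
    · rintro (((h | h) | h) | h)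
      · exact h ▸ (f (Sum.inl false)).2
      · exact h ▸ (f (Sum.inl true)).2
      · simp only [extractTup, Finset.coe_image, Set.mem_image, Finset.coe_univ,
          Set.mem_univ, true_and, Set.image_univ, Set.mem_range] at h
        obtain ⟨i, rfl⟩ := h
        exact (f (Sum.inr (Sum.inl i))).2
      · simp only [extractTup, Finset.coe_image, Set.mem_image, Finset.coe_univ,
          Set.mem_univ, true_and, Set.image_univ, Set.mem_range] at h
        obtain ⟨j, rfl⟩ := h
        exact (f (Sum.inr (Sum.inr j))).2
    · intro hx
      obtain ⟨p, rfl⟩ := hval x hx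
      show _ ∈ (({_, _} : Set V) ∪ _ ∪ _)
      rcases p with (_|_) | (i|j)
      · exact Or.inl (Or.inl (Or.inl rfl))
      · exact Or.inl (Or.inl (Or.inr rfl))
      · refine Or.inl (Or.inr ?_)
        simp [extractTup]
      · refine Or.inr ?_
        simp [extractTup]
  · constructor
    · rintro (⟨rfl, rfl⟩ | ⟨rfl, rfl⟩ | ⟨rfl, h⟩ | ⟨rfl, h⟩ | ⟨rfl, h⟩ | ⟨rfl, h⟩)
      · exact extract_adj f (dsadj0 a b)
      · exact G'.adj_symm (extract_adj f (dsadj0 a b))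
      · simp only [extractTup, Finset.mem_image, Finset.mem_univ, true_and] at h
        obtain ⟨i, rfl⟩ := h
        exact extract_adj f (dsadj1 a b i)
      · simp only [extractTup, Finset.mem_image, Finset.mem_univ, true_and] at h
        obtain ⟨i, rfl⟩ := h
        exact G'.adj_symm (extract_adj f (dsadj1 a b i))
      · simp only [extractTup, Finset.mem_image, Finset.mem_univ, true_and] at h
        obtain ⟨j, rfl⟩ := h
        exact extract_adj f (dsadj2 a b j)
      · simp only [extractTup, Finset.mem_image, Finset.mem_univ, true_and] at h
        obtain ⟨j, rfl⟩ := h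
        exact G'.adj_symm (extract_adj f (dsadj2 a b j))
    · intro hxy
      obtain ⟨p, rfl⟩ := hval x (G'.edge_vert hxy)
      obtain ⟨q, rfl⟩ := hval y (G'.edge_vert (G'.adj_symm hxy))
      have : G'.coe.Adj (f p) (f q) := by
        rw [SimpleGraph.Subgraph.coe_adj]; exact hxy
      have hds : (DS a b).Adj p q := f.map_rel_iff'.mp this
      rw [dsadj_iff] at hds
      show ((_ = _ ∧ _ = _) ∨ (_ = _ ∧ _ = _) ∨ _ ∨ _ ∨ _ ∨ _)
      rcases hds with ⟨rfl, rfl⟩ | ⟨rfl, rfl⟩ | ⟨rfl, i, rfl⟩ | ⟨rfl, i, rfl⟩ | ⟨rfl, j, rfl⟩ | ⟨rfl, j, rfl⟩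
      · exact Or.inl ⟨rfl, rfl⟩
      · exact Or.inr (Or.inl ⟨rfl, rfl⟩)
      · refine Or.inr (Or.inr (Or.inl ⟨rfl, ?_⟩)); simp [extractTup]
      · refine Or.inr (Or.inr (Or.inr (Or.inl ⟨rfl, ?_⟩))); simp [extractTup]
      · refine Or.inr (Or.inr (Or.inr (Or.inr (Or.inl ⟨rfl, ?_⟩)))); simp [extractTup]
      · exact Or.inr (Or.inr (Or.inr (Or.inr (Or.inr ⟨rfl, by simp [extractTup]⟩))))
end extract
-- ############ fibers ############
section fibers
open Finset
variable {V : Type*} [Fintype V] [DecidableEq V] {a b : ℕ} {G : SimpleGraph V} [DecidableRel G.Adj]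
variable {t t' : (V × V) × Finset V × Finset V}

lemma adj_u_iff (htf : TF G) (ht : tupleCond a b G t) (x : V) :
    (tupSub ht).Adj t.1.1 x ↔ (x = t.1.2 ∨ x ∈ t.2.1) := by
  have h1 := ht.hne
  have h2 := ht.hAu
  have h3 := ht.hBu
  have h4 := ht.hAv
  have h5 := ht.hBv
  show ((_ ∧ _) ∨ (_ ∧ _) ∨ (_ ∧ _) ∨ (_ ∧ _) ∨ (_ ∧ _) ∨ (_ ∧ _)) ↔ _
  constructor
  · rintro (⟨h, rfl⟩ | ⟨h, rfl⟩ | ⟨h, hm⟩ | ⟨rfl, hm⟩ | ⟨h, hm⟩ | ⟨rfl, hm⟩) <;> tauto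
  · rintro (rfl | hm) <;> tauto

lemma adj_v_iff (htf : TF G) (ht : tupleCond a b G t) (x : V) :
    (tupSub ht).Adj t.1.2 x ↔ (x = t.1.1 ∨ x ∈ t.2.2) := by
  have h1 := ht.hne
  have h2 := ht.hAu
  have h3 := ht.hBu
  have h4 := ht.hAv
  have h5 := ht.hBv
  show ((_ ∧ _) ∨ (_ ∧ _) ∨ (_ ∧ _) ∨ (_ ∧ _) ∨ (_ ∧ _) ∨ (_ ∧ _)) ↔ _
  constructor
  · rintro (⟨h, rfl⟩ | ⟨h, rfl⟩ | ⟨h, hm⟩ | ⟨h, hm⟩ | ⟨h, hm⟩ | ⟨rfl, hm⟩) <;> tauto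
  · rintro (rfl | hm) <;> tauto

lemma adj_A_iff (htf : TF G) (ht : tupleCond a b G t) {w : V} (hw : w ∈ t.2.1) (x : V) :
    (tupSub ht).Adj w x ↔ x = t.1.1 := by
  have h1 := ht.hne
  have h2 := ht.hAu
  have h3 := ht.hBu
  have h4 := ht.hAv
  have h5 := ht.hBv
  have h6 := ht.hAB htf
  show ((_ ∧ _) ∨ (_ ∧ _) ∨ (_ ∧ _) ∨ (_ ∧ _) ∨ (_ ∧ _) ∨ (_ ∧ _)) ↔ _
  constructor
  · rintro (⟨rfl, rfl⟩ | ⟨rfl, rfl⟩ | ⟨rfl, hm⟩ | ⟨rfl, hm⟩ | ⟨rfl, hm⟩ | ⟨rfl, hm⟩) <;>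
      first | rfl | (exfalso; tauto)
  · rintro rfl; tauto

lemma adj_B_iff (htf : TF G) (ht : tupleCond a b G t) {w : V} (hw : w ∈ t.2.2) (x : V) :
    (tupSub ht).Adj w x ↔ x = t.1.2 := by
  have h1 := ht.hne
  have h2 := ht.hAu
  have h3 := ht.hBu
  have h4 := ht.hAv
  have h5 := ht.hBv
  have h6 := ht.hAB htf
  show ((_ ∧ _) ∨ (_ ∧ _) ∨ (_ ∧ _) ∨ (_ ∧ _) ∨ (_ ∧ _) ∨ (_ ∧ _)) ↔ _
  constructor
  · rintro (⟨rfl, rfl⟩ | ⟨rfl, rfl⟩ | ⟨rfl, hm⟩ | ⟨rfl, hm⟩ | ⟨rfl, hm⟩ | ⟨rfl, hm⟩) <;>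
      first | rfl | (exfalso; tauto)
  · rintro rfl; tauto

/-- centers of a tuple-subgraph are in {u, v} -/
lemma center_cases (htf : TF G) (ht : tupleCond a b G t) {w x y : V}
    (hx : (tupSub ht).Adj w x) (hy : (tupSub ht).Adj w y) (hxy : x ≠ y) :
    w = t.1.1 ∨ w = t.1.2 := by
  by_contra hcon
  push_neg at hcon
  have hw : w ∈ (tupSub ht).verts := (tupSub ht).edge_vert hx
  rcases hw with ((h | h) | h) | h
  · exact hcon.1 h
  · exact hcon.2 h
  · rw [adj_A_iff htf ht (by exact_mod_cast h)] at hx hy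
    exact hxy (hx.trans hy.symm)
  · rw [adj_B_iff htf ht (by exact_mod_cast h)] at hx hy
    exact hxy (hx.trans hy.symm)

def tswap (t : (V × V) × Finset V × Finset V) : (V × V) × Finset V × Finset V :=
  ((t.1.2, t.1.1), (t.2.2, t.2.1))

lemma tswap_cond (ht : tupleCond a b G t) : tupleCond b a G (tswap t) :=
  ⟨G.adj_symm ht.huv, ht.2.2.2.1, ht.cardB, ht.2.1, ht.cardA⟩

lemma tswap_sub (ht : tupleCond a b G t) (ht2 : tupleCond b a G (tswap t)) :
    tupSub ht2 = tupSub ht := by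
  ext x y
  · show x ∈ (({t.1.2, t.1.1} : Set V) ∪ ↑t.2.2 ∪ ↑t.2.1) ↔
      x ∈ (({t.1.1, t.1.2} : Set V) ∪ ↑t.2.1 ∪ ↑t.2.2)
    constructor <;> (rintro (((h|h)|h)|h) <;> first
      | exact Or.inl (Or.inl (Or.inl h)) | exact Or.inl (Or.inl (Or.inr h))
      | exact Or.inl (Or.inr h) | exact Or.inr h)
  · show ((_ ∧ _) ∨ _) ↔ ((_ ∧ _) ∨ _)
    tauto

lemma tuple_unique (htf : TF G) (ha : 0 < a) (hb : 0 < b)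
    (ht : tupleCond a b G t) (ht' : tupleCond a b G t')
    (heq : tupSub ht' = tupSub ht) : t' = t ∨ (a = b ∧ t' = tswap t) := by
  -- the centers of t' are centers of t
  obtain ⟨a0, ha0⟩ := Finset.card_pos.mp (ht'.cardA ▸ ha)
  obtain ⟨b0, hb0⟩ := Finset.card_pos.mp (ht'.cardB ▸ hb)
  have huv' : (tupSub ht).Adj t'.1.1 t'.1.2 := heq ▸ (by left; exact ⟨rfl, rfl⟩)
  have hua' : (tupSub ht).Adj t'.1.1 a0 := heq ▸ (by
    right; right; left; exact ⟨rfl, ha0⟩)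
  have hvb' : (tupSub ht).Adj t'.1.2 b0 := heq ▸ (by
    right; right; right; right; left; exact ⟨rfl, hb0⟩)
  have hva' : a0 ≠ t'.1.2 := fun h => ht'.hAv (h ▸ ha0)
  have hub' : b0 ≠ t'.1.1 := fun h => ht'.hBu (h ▸ hb0)
  have hu' : t'.1.1 = t.1.1 ∨ t'.1.1 = t.1.2 :=
    center_cases htf ht huv' hua' (fun h => hva' h.symm)
  have hv' : t'.1.2 = t.1.1 ∨ t'.1.2 = t.1.2 :=
    center_cases htf ht ((tupSub ht).adj_symm huv') hvb' (fun h => hub' h.symm)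
  have memA' : ∀ x ∈ t'.2.1, (tupSub ht).Adj t'.1.1 x := fun x hx =>
    heq ▸ (by right; right; left; exact ⟨rfl, hx⟩)
  have memB' : ∀ x ∈ t'.2.2, (tupSub ht).Adj t'.1.2 x := fun x hx =>
    heq ▸ (by right; right; right; right; left; exact ⟨rfl, hx⟩)
  have memA : ∀ x ∈ t.2.1, (tupSub ht').Adj t.1.1 x := fun x hx =>
    heq.symm ▸ (by right; right; left; exact ⟨rfl, hx⟩)
  have memB : ∀ x ∈ t.2.2, (tupSub ht').Adj t.1.2 x := fun x hx =>
    heq.symm ▸ (by right; right; right; right; left; exact ⟨rfl, hx⟩)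
  rcases hu' with hu1 | hu1 <;> rcases hv' with hv1 | hv1
  · exact absurd (hu1.trans hv1.symm) ht'.hne
  · -- t' = t
    left
    have hA : t'.2.1 = t.2.1 := by
      ext x
      constructor
      · intro hx
        rcases (adj_u_iff htf ht x).mp (hu1 ▸ memA' x hx) with h | h
        · exact absurd (h.trans hv1.symm) (fun hh => ht'.hAv (hh ▸ hx))
        · exact h
      · intro hx
        rcases (adj_u_iff htf ht' x).mp (hu1 ▸ memA x hx) with h | h
        · exact absurd (h.trans hv1) (fun hh => ht.hAv (hh ▸ hx))
        · exact h
    have hB : t'.2.2 = t.2.2 := by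
      ext x
      constructor
      · intro hx
        rcases (adj_v_iff htf ht x).mp (hv1 ▸ memB' x hx) with h | h
        · exact absurd (h.trans hu1.symm) (fun hh => ht'.hBu (hh ▸ hx))
        · exact h
      · intro hx
        rcases (adj_v_iff htf ht' x).mp (hv1 ▸ memB x hx) with h | h
        · exact absurd (h.trans hu1) (fun hh => ht.hBu (hh ▸ hx))
        · exact h
    exact Prod.ext (Prod.ext hu1 hv1) (Prod.ext hA hB)
  · -- t' = tswap t
    right
    have hA : t'.2.1 = t.2.2 := by
      ext x
      constructor
      · intro hx
        rcases (adj_v_iff htf ht x).mp (hu1 ▸ memA' x hx) with h | h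
        · exact absurd (h.trans hv1.symm) (fun hh => ht'.hAv (hh ▸ hx))
        · exact h
      · intro hx
        rcases (adj_u_iff htf ht' x).mp (hu1.symm ▸ memB x hx) with h | h
        · exact absurd (h.trans hv1) (fun hh => ht.hBu (hh ▸ hx))
        · exact h
    have hB : t'.2.2 = t.2.1 := by
      ext x
      constructor
      · intro hx
        rcases (adj_u_iff htf ht x).mp (hv1 ▸ memB' x hx) with h | h
        · exact absurd (h.trans hu1.symm) (fun hh => ht'.hBu (hh ▸ hx))
        · exact h
      · intro hx
        rcases (adj_v_iff htf ht' x).mp (hv1.symm ▸ memA x hx) with h | h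
        · exact absurd (h.trans hu1) (fun hh => ht.hAv (hh ▸ hx))
        · exact h
    refine ⟨?_, ?_⟩
    · rw [← ht'.cardA, hA, ht.cardB]
    · exact Prod.ext (Prod.ext hu1 hv1) (Prod.ext hA hB)
  · exact absurd (hu1.trans hv1.symm) ht'.hne
end fibers
-- ############ counting formula ############
section countform
open Finset
open scoped Classical
variable {V : Type*} [Fintype V] [DecidableEq V] {a b : ℕ} {G : SimpleGraph V} [DecidableRel G.Adj]

noncomputable def subOf (a b : ℕ) (G : SimpleGraph V) [DecidableRel G.Adj]
    (t : (V × V) × Finset V × Finset V) : G.Subgraph :=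
  if h : tupleCond a b G t then tupSub h else ⊥

lemma mem_TT {t : (V × V) × Finset V × Finset V} : t ∈ TT a b G ↔ tupleCond a b G t := by
  simp [TT]

lemma subOf_eq {t : (V × V) × Finset V × Finset V} (ht : tupleCond a b G t) :
    subOf a b G t = tupSub ht := dif_pos ht

lemma copyset_eq (htf : TF G) :
    {G' : G.Subgraph | Nonempty (DS a b ≃g G'.coe)} = ↑((TT a b G).image (subOf a b G)) := by
  ext G'
  simp only [Set.mem_setOf_eq, Finset.coe_image, Set.mem_image, Finset.mem_coe]
  constructor
  · rintro ⟨f⟩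
    exact ⟨extractTup f, mem_TT.mpr (extract_cond f), (subOf_eq (extract_cond f)).trans (extract_eq f)⟩
  · rintro ⟨t, htT, rfl⟩
    rw [subOf_eq (mem_TT.mp htT)]
    exact ⟨tupIso htf (mem_TT.mp htT)⟩

lemma copyCount_DS (htf : TF G) :
    _root_.copyCount (DS a b) G = ((TT a b G).image (subOf a b G)).card := by
  unfold _root_.copyCount
  rw [copyset_eq htf]
  exact Set.ncard_coe_finset _

lemma fiber_card (htf : TF G) (ha : 0 < a) (hb : 0 < b)
    {t : (V × V) × Finset V × Finset V} (htT : t ∈ TT a b G) :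
    ((TT a b G).filter (fun t' => subOf a b G t' = subOf a b G t)).card
      = if a = b then 2 else 1 := by
  have ht := mem_TT.mp htT
  by_cases hab : a = b
  · subst hab
    rw [if_pos rfl]
    have hswap : tupleCond a a G (tswap t) := tswap_cond ht
    have : (TT a a G).filter (fun t' => subOf a a G t' = subOf a a G t) = {t, tswap t} := by
      ext t'
      simp only [Finset.mem_filter, Finset.mem_insert, Finset.mem_singleton]
      constructor
      · rintro ⟨ht'T, heq⟩
        have ht' := mem_TT.mp ht'T
        rw [subOf_eq ht', subOf_eq ht] at heq
        rcases tuple_unique htf ha ha ht ht' heq with h | h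
        · exact Or.inl h
        · exact Or.inr h.2
      · rintro (rfl | rfl)
        · exact ⟨htT, rfl⟩
        · refine ⟨mem_TT.mpr hswap, ?_⟩
          rw [subOf_eq hswap, subOf_eq ht]
          exact tswap_sub ht hswap
    rw [this]
    rw [Finset.card_insert_of_notMem (by
      simp only [Finset.mem_singleton]
      intro h
      exact ht.hne (congrArg (fun z => z.1.1) h))]
    simp
  · rw [if_neg hab]
    have : (TT a b G).filter (fun t' => subOf a b G t' = subOf a b G t) = {t} := by
      ext t'
      simp only [Finset.mem_filter, Finset.mem_singleton]
      constructor
      · rintro ⟨ht'T, heq⟩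
        have ht' := mem_TT.mp ht'T
        rw [subOf_eq ht', subOf_eq ht] at heq
        rcases tuple_unique htf ha hb ht ht' heq with h | h
        · exact h
        · exact absurd h.1 hab
      · rintro rfl
        exact ⟨htT, rfl⟩
    rw [this, Finset.card_singleton]

lemma TT_card (htf : TF G) (ha : 0 < a) (hb : 0 < b) :
    (TT a b G).card = (if a = b then 2 else 1) * ((TT a b G).image (subOf a b G)).card := by
  rw [Finset.card_eq_sum_card_image (subOf a b G) (TT a b G)]
  have hcongr : ∀ s ∈ (TT a b G).image (subOf a b G),
      ((TT a b G).filter (fun t' => subOf a b G t' = s)).card = (if a = b then 2 else 1) := by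
    intro s hs
    obtain ⟨t, htT, rfl⟩ := Finset.mem_image.mp hs
    exact fiber_card htf ha hb htT
  rw [Finset.sum_congr rfl hcongr, Finset.sum_const, smul_eq_mul, mul_comm]

/-- the degree-sum formula for the number of tuples -/
lemma TT_card_eq_sum :
    (TT a b G).card = ∑ u : V, ∑ v ∈ G.neighborFinset u,
      ((G.degree u - 1).choose a * (G.degree v - 1).choose b) := by
  have hmem : ∀ t ∈ TT a b G, t.1 ∈ (Finset.univ ×ˢ Finset.univ).filter
      (fun p : V × V => G.Adj p.1 p.2) := by
    intro t htT
    simp only [Finset.mem_filter, Finset.mem_product, Finset.mem_univ, true_and]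
    exact (mem_TT.mp htT).huv
  rw [Finset.card_eq_sum_card_fiberwise hmem]
  have hkey : ∀ p ∈ (Finset.univ ×ˢ Finset.univ).filter (fun p : V × V => G.Adj p.1 p.2),
      ((TT a b G).filter (fun t => t.1 = p)).card
        = (G.degree p.1 - 1).choose a * (G.degree p.2 - 1).choose b := by
    rintro ⟨u, v⟩ hp
    simp only [Finset.mem_filter, Finset.mem_product, Finset.mem_univ, true_and] at hp
    have hbij : ((TT a b G).filter (fun t => t.1 = (u, v))).card =
        (((G.neighborFinset u \ {v}).powersetCard a) ×ˢ
          ((G.neighborFinset v \ {u}).powersetCard b)).card := by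
      refine Finset.card_bij' (fun t _ => t.2) (fun AB _ => ((u, v), AB)) ?hi ?hj ?li ?ri
      case hi =>
        rintro ⟨⟨u', v'⟩, A, B⟩ htm
        simp only [Finset.mem_filter, mem_TT, Prod.mk.injEq] at htm
        obtain ⟨ht, rfl, rfl⟩ := htm
        simp only [Finset.mem_product, Finset.mem_powersetCard]
        exact ⟨⟨ht.2.1, ht.cardA⟩, ⟨ht.2.2.2.1, ht.cardB⟩⟩
      case hj =>
        rintro ⟨A, B⟩ hAB
        simp only [Finset.mem_product, Finset.mem_powersetCard] at hAB
        exact Finset.mem_filter.mpr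
          ⟨mem_TT.mpr ⟨hp, hAB.1.1, hAB.1.2, hAB.2.1, hAB.2.2⟩, rfl⟩
      case li =>
        rintro ⟨⟨u', v'⟩, A, B⟩ htm
        simp only [Finset.mem_filter, Prod.mk.injEq] at htm
        obtain ⟨-, h1, h2⟩ := htm
        subst h1; subst h2
        rfl
      case ri =>
        rintro ⟨A, B⟩ hAB
        rfl
    rw [hbij, Finset.card_product, Finset.card_powersetCard, Finset.card_powersetCard]
    congr 1
    · congr 1
      rw [Finset.card_sdiff_of_subset (by simp [SimpleGraph.mem_neighborFinset, hp]),
        Finset.card_singleton, SimpleGraph.card_neighborFinset_eq_degree]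
    · congr 1
      rw [Finset.card_sdiff_of_subset (by simp [SimpleGraph.mem_neighborFinset, G.adj_symm hp]),
        Finset.card_singleton, SimpleGraph.card_neighborFinset_eq_degree]
  rw [Finset.sum_congr rfl hkey]
  exact Finset.sum_finset_product _ _ _ (by
    intro p
    simp [SimpleGraph.mem_neighborFinset])

/-- main counting theorem -/
theorem count_formula (htf : TF G) (ha : 0 < a) (hb : 0 < b) :
    (if a = b then 2 else 1) * _root_.copyCount (DS a b) G
      = ∑ u : V, ∑ v ∈ G.neighborFinset u,
          ((G.degree u - 1).choose a * (G.degree v - 1).choose b) := by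
  rw [copyCount_DS htf, ← TT_card htf ha hb, TT_card_eq_sum]
end countform
-- ############ the optimization inequality ############
section ineq
open Finset
variable {V : Type*} [Fintype V] [DecidableEq V]

/-- weight of the complete bipartite graph K_{m, n-m} -/
def Wnum (n a b m : ℕ) : ℕ :=
  m * (n - m) * ((m - 1).choose a * (n - m - 1).choose b + (n - m - 1).choose a * (m - 1).choose b)

lemma deg_sum_le {G : SimpleGraph V} [DecidableRel G.Adj] (htf : TF G) {u v : V}
    (h : G.Adj u v) : G.degree u + G.degree v ≤ Fintype.card V := by
  rw [← SimpleGraph.card_neighborFinset_eq_degree, ← SimpleGraph.card_neighborFinset_eq_degree]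
  rw [← Finset.card_union_of_disjoint (by
    rw [Finset.disjoint_left]
    intro w hw1 hw2
    rw [SimpleGraph.mem_neighborFinset] at hw1 hw2
    exact htf hw1 h (G.adj_symm hw2))]
  exact Finset.card_le_univ _

lemma pair_bound_nat (a b n du dv : ℕ) (h1 : 1 ≤ du) (h2 : 1 ≤ dv) (h3 : du + dv ≤ n) :
    (du - 1).choose a * (dv - 1).choose b + (dv - 1).choose a * (du - 1).choose b ≤
    (max du dv - 1).choose a * (n - max du dv - 1).choose b
      + (n - max du dv - 1).choose a * (max du dv - 1).choose b := by
  rcases le_total du dv with h | h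
  · rw [max_eq_right h]
    have hx : du - 1 ≤ n - dv - 1 := by omega
    rw [add_comm]
    exact add_le_add
      (Nat.mul_le_mul (Nat.choose_le_choose a le_rfl) (Nat.choose_le_choose b hx))
      (Nat.mul_le_mul (Nat.choose_le_choose a hx) (Nat.choose_le_choose b le_rfl))
  · rw [max_eq_left h]
    have hx : dv - 1 ≤ n - du - 1 := by omega
    exact add_le_add
      (Nat.mul_le_mul (Nat.choose_le_choose a le_rfl) (Nat.choose_le_choose b hx))
      (Nat.mul_le_mul (Nat.choose_le_choose a hx) (Nat.choose_le_choose b le_rfl))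

lemma core_nat (du dv n : ℕ) (h1 : 1 ≤ du) (h2 : 1 ≤ dv) (h3 : du + dv ≤ n) :
    n * du * dv ≤ (du + dv) * (max du dv * (n - max du dv)) := by
  rcases le_total du dv with h | h
  · rw [max_eq_right h]
    obtain ⟨k, rfl⟩ : ∃ k, n = dv + k := ⟨n - dv, by omega⟩
    have hx : du ≤ k := by omega
    simp only [Nat.add_sub_cancel_left]
    nlinarith [Nat.mul_le_mul_left (dv * dv) hx]
  · rw [max_eq_left h]
    obtain ⟨k, rfl⟩ : ∃ k, n = du + k := ⟨n - du, by omega⟩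
    have hx : dv ≤ k := by omega
    simp only [Nat.add_sub_cancel_left]
    nlinarith [Nat.mul_le_mul_left (du * du) hx]

/-- the per-ordered-pair rational bound -/
lemma pairQ (a b n M du dv : ℕ) (h1 : 1 ≤ du) (h2 : 1 ≤ dv) (h3 : du + dv ≤ n)
    (hM : ∀ m ∈ Finset.Icc 1 (n - 1), Wnum n a b m ≤ M) :
    ((du - 1).choose a * (dv - 1).choose b + (dv - 1).choose a * (du - 1).choose b : ℚ)
      ≤ (M : ℚ) * (n : ℚ)⁻¹ * ((du : ℚ)⁻¹ + (dv : ℚ)⁻¹) := by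
  set D := max du dv with hD
  have hD1 : 1 ≤ D := le_trans h1 (le_max_left _ _)
  have hDn : D ≤ n - 1 := by omega
  have hn2 : 2 ≤ n := by omega
  have hWM : Wnum n a b D ≤ M := hM D (Finset.mem_Icc.mpr ⟨hD1, hDn⟩)
  set q : ℕ := (D - 1).choose a * (n - D - 1).choose b + (n - D - 1).choose a * (D - 1).choose b
    with hq
  have hWval : Wnum n a b D = D * (n - D) * q := rfl
  -- positivity facts
  have hnD : 1 ≤ n - D := by omega
  have hDpos : (0 : ℚ) < (D : ℚ) := by exact_mod_cast hD1
  have hnDpos : (0 : ℚ) < ((n - D : ℕ) : ℚ) := by exact_mod_cast hnD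
  have hnpos : (0 : ℚ) < (n : ℚ) := by positivity
  have hdupos : (0 : ℚ) < (du : ℚ) := by exact_mod_cast h1
  have hdvpos : (0 : ℚ) < (dv : ℚ) := by exact_mod_cast h2
  -- step 1
  have step1 : ((du - 1).choose a * (dv - 1).choose b
      + (dv - 1).choose a * (du - 1).choose b : ℚ) ≤ (q : ℚ) := by
    exact_mod_cast pair_bound_nat a b n du dv h1 h2 h3
  -- step 2 : q ≤ M / (D * (n - D))
  have step2 : (q : ℚ) ≤ (M : ℚ) / ((D : ℚ) * ((n - D : ℕ) : ℚ)) := by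
    rw [le_div_iff₀ (by positivity)]
    have : (q * (D * (n - D)) : ℕ) ≤ M := by
      calc q * (D * (n - D)) = Wnum n a b D := by rw [hWval]; ring
      _ ≤ M := hWM
    calc (q : ℚ) * ((D : ℚ) * ((n - D : ℕ) : ℚ)) = ((q * (D * (n - D)) : ℕ) : ℚ) := by
          push_cast; ring
    _ ≤ (M : ℚ) := by exact_mod_cast this
  -- step 3
  have step3 : (M : ℚ) / ((D : ℚ) * ((n - D : ℕ) : ℚ))
      ≤ (M : ℚ) * (n : ℚ)⁻¹ * ((du : ℚ)⁻¹ + (dv : ℚ)⁻¹) := by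
    have hcore : (n * du * dv : ℚ) ≤ ((du + dv : ℚ)) * ((D : ℚ) * ((n - D : ℕ) : ℚ)) := by
      exact_mod_cast core_nat du dv n h1 h2 h3
    have hM0 : (0 : ℚ) ≤ (M : ℚ) := by positivity
    rw [div_eq_mul_inv]
    have hrw : (n : ℚ)⁻¹ * ((du : ℚ)⁻¹ + (dv : ℚ)⁻¹)
        = ((du + dv : ℚ)) / ((n : ℚ) * (du : ℚ) * (dv : ℚ)) := by
      field_simp
      ring
    rw [mul_assoc, hrw]
    apply mul_le_mul_of_nonneg_left _ hM0
    rw [inv_eq_one_div, div_le_div_iff₀ (by positivity) (by positivity)]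
    calc (1 : ℚ) * ((n : ℚ) * (du : ℚ) * (dv : ℚ)) = (n * du * dv : ℚ) := by ring
    _ ≤ ((du + dv : ℚ)) * ((D : ℚ) * ((n - D : ℕ) : ℚ)) := hcore
  exact le_trans step1 (le_trans step2 step3)
end ineq
-- ############ global bound ############
section globalbound
open Finset
variable {V : Type*} [Fintype V] [DecidableEq V] {a b : ℕ} {G : SimpleGraph V} [DecidableRel G.Adj]

theorem sum_le_M (htf : TF G) {n M : ℕ} (hn : Fintype.card V = n)
    (hM : ∀ m ∈ Finset.Icc 1 (n - 1), Wnum n a b m ≤ M) :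
    (∑ u : V, ∑ v ∈ G.neighborFinset u,
      ((G.degree u - 1).choose a * (G.degree v - 1).choose b)) ≤ M := by
  classical
  set pairs : Finset (V × V) := (Finset.univ ×ˢ Finset.univ).filter
    (fun p : V × V => G.Adj p.1 p.2) with hpairs
  have hmem : ∀ p : V × V, p ∈ pairs ↔ p.1 ∈ (Finset.univ : Finset V) ∧ p.2 ∈ G.neighborFinset p.1 := by
    intro p; simp [hpairs, SimpleGraph.mem_neighborFinset]
  -- degrees along pairs
  have hdeg : ∀ p ∈ pairs, 1 ≤ G.degree p.1 ∧ 1 ≤ G.degree p.2 ∧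
      G.degree p.1 + G.degree p.2 ≤ n := by
    rintro ⟨u, v⟩ hp
    rw [hmem] at hp
    have hadj : G.Adj u v := by
      have := hp.2; rwa [SimpleGraph.mem_neighborFinset] at this
    refine ⟨?_, ?_, hn ▸ deg_sum_le htf hadj⟩
    · exact G.degree_pos_iff_exists_adj (v := u) |>.mpr ⟨v, hadj⟩
    · exact G.degree_pos_iff_exists_adj (v := v) |>.mpr ⟨u, G.adj_symm hadj⟩
  have hpmem : ∀ u v : V, (u, v) ∈ pairs ↔ G.Adj u v := by
    intro u v; simp [hpairs]
  -- swap invariance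
  have hswap : ∀ f : V → V → ℚ, ∑ p ∈ pairs, f p.1 p.2 = ∑ p ∈ pairs, f p.2 p.1 := by
    intro f
    refine Finset.sum_nbij' (fun p => Prod.swap p) (fun p => Prod.swap p) ?_ ?_ ?_ ?_ ?_
    · rintro ⟨u, v⟩ hp; exact (hpmem v u).mpr (G.adj_symm ((hpmem u v).mp hp))
    · rintro ⟨u, v⟩ hp; exact (hpmem v u).mpr (G.adj_symm ((hpmem u v).mp hp))
    · rintro ⟨u, v⟩ _; rfl
    · rintro ⟨u, v⟩ _; rfl
    · rintro ⟨u, v⟩ _; rfl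
  -- inverse degree sum
  have hinv : ∑ p ∈ pairs, ((G.degree p.1 : ℚ))⁻¹ ≤ (n : ℚ) := by
    rw [Finset.sum_finset_product pairs Finset.univ (fun u => G.neighborFinset u) hmem]
    have : ∀ u : V, ∑ v ∈ G.neighborFinset u, ((G.degree u : ℚ))⁻¹ ≤ 1 := by
      intro u
      rw [Finset.sum_const, SimpleGraph.card_neighborFinset_eq_degree, nsmul_eq_mul]
      rcases Nat.eq_zero_or_pos (G.degree u) with h | h
      · simp [h]
      · rw [mul_inv_cancel₀ (by exact_mod_cast h.ne')]
    calc ∑ u : V, ∑ v ∈ G.neighborFinset u, ((G.degree u : ℚ))⁻¹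
        ≤ ∑ _u : V, (1 : ℚ) := Finset.sum_le_sum (fun u _ => this u)
    _ = (Fintype.card V : ℚ) := by rw [Finset.sum_const, Finset.card_univ, nsmul_eq_mul, mul_one]
    _ = (n : ℚ) := by rw [hn]
  -- the natural sum as a pair sum
  have hP : (∑ u : V, ∑ v ∈ G.neighborFinset u,
      ((G.degree u - 1).choose a * (G.degree v - 1).choose b) : ℕ)
      = ∑ p ∈ pairs, ((G.degree p.1 - 1).choose a * (G.degree p.2 - 1).choose b) := by
    rw [Finset.sum_finset_product pairs Finset.univ (fun u => G.neighborFinset u) hmem]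
  -- main chain in ℚ
  have key : 2 * ((∑ p ∈ pairs, ((G.degree p.1 - 1).choose a * (G.degree p.2 - 1).choose b) : ℕ) : ℚ)
      ≤ 2 * (M : ℚ) := by
    have hcast : ((∑ p ∈ pairs, ((G.degree p.1 - 1).choose a * (G.degree p.2 - 1).choose b) : ℕ) : ℚ)
        = ∑ p ∈ pairs, (((G.degree p.1 - 1).choose a * (G.degree p.2 - 1).choose b : ℕ) : ℚ) := by
      push_cast; ring_nf
    rw [hcast]
    calc 2 * ∑ p ∈ pairs, (((G.degree p.1 - 1).choose a * (G.degree p.2 - 1).choose b : ℕ) : ℚ)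
        = ∑ p ∈ pairs, ((((G.degree p.1 - 1).choose a * (G.degree p.2 - 1).choose b : ℕ) : ℚ)
          + (((G.degree p.2 - 1).choose a * (G.degree p.1 - 1).choose b : ℕ) : ℚ)) := by
          rw [Finset.sum_add_distrib]
          rw [show (∑ p ∈ pairs, (((G.degree p.2 - 1).choose a * (G.degree p.1 - 1).choose b : ℕ) : ℚ))
            = ∑ p ∈ pairs, (((G.degree p.1 - 1).choose a * (G.degree p.2 - 1).choose b : ℕ) : ℚ) from
            hswap (fun x y => (((G.degree y - 1).choose a * (G.degree x - 1).choose b : ℕ) : ℚ))]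
          ring
    _ ≤ ∑ p ∈ pairs, (M : ℚ) * (n : ℚ)⁻¹ * (((G.degree p.1 : ℚ))⁻¹ + ((G.degree p.2 : ℚ))⁻¹) := by
          apply Finset.sum_le_sum
          intro p hp
          obtain ⟨h1, h2, h3⟩ := hdeg p hp
          have := pairQ a b n M (G.degree p.1) (G.degree p.2) h1 h2 h3 hM
          calc ((((G.degree p.1 - 1).choose a * (G.degree p.2 - 1).choose b : ℕ) : ℚ)
              + (((G.degree p.2 - 1).choose a * (G.degree p.1 - 1).choose b : ℕ) : ℚ))
              = (((G.degree p.1 - 1).choose a * (G.degree p.2 - 1).choose b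
                + (G.degree p.2 - 1).choose a * (G.degree p.1 - 1).choose b : ℕ) : ℚ) := by push_cast; ring
          _ ≤ _ := by exact_mod_cast this
    _ = (M : ℚ) * (n : ℚ)⁻¹ * (∑ p ∈ pairs, (((G.degree p.1 : ℚ))⁻¹ + ((G.degree p.2 : ℚ))⁻¹)) := by
          rw [Finset.mul_sum]
    _ = (M : ℚ) * (n : ℚ)⁻¹ * (2 * ∑ p ∈ pairs, ((G.degree p.1 : ℚ))⁻¹) := by
          congr 1
          rw [Finset.sum_add_distrib]
          rw [show (∑ p ∈ pairs, ((G.degree p.2 : ℚ))⁻¹)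
            = ∑ p ∈ pairs, ((G.degree p.1 : ℚ))⁻¹ from
            hswap (fun x y => ((G.degree y : ℚ))⁻¹)]
          ring
    _ ≤ (M : ℚ) * (n : ℚ)⁻¹ * (2 * (n : ℚ)) := by
          apply mul_le_mul_of_nonneg_left _ (by positivity)
          apply mul_le_mul_of_nonneg_left hinv (by norm_num)
    _ ≤ 2 * (M : ℚ) := by
          rcases Nat.eq_zero_or_pos n with h | h
          · subst h; simp
          · have : (0 : ℚ) < (n : ℚ) := by exact_mod_cast h
            rw [show (M : ℚ) * (n : ℚ)⁻¹ * (2 * (n : ℚ)) = 2 * (M : ℚ) * ((n : ℚ)⁻¹ * (n : ℚ)) by ring,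
              inv_mul_cancel₀ this.ne']
            ring_nf
            exact le_refl _
  have : ((∑ u : V, ∑ v ∈ G.neighborFinset u,
      ((G.degree u - 1).choose a * (G.degree v - 1).choose b) : ℕ) : ℚ) ≤ (M : ℚ) := by
    rw [hP]
    linarith [key]
  exact_mod_cast this
end globalbound
-- ############ complete bipartite computations ############
section bipartite
open Finset
open scoped Classical
variable {m k : ℕ}

lemma tf_bip : TF (completeBipartiteGraph (Fin m) (Fin k)) := by
  rintro (x | x) (y | y) (z | z) h1 h2 h3 <;> simp_all

lemma bip_nbr_inl (i : Fin m) :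
    (completeBipartiteGraph (Fin m) (Fin k)).neighborFinset (Sum.inl i)
      = Finset.univ.image Sum.inr := by
  ext (w | w) <;> simp [SimpleGraph.mem_neighborFinset]

lemma bip_nbr_inr (j : Fin k) :
    (completeBipartiteGraph (Fin m) (Fin k)).neighborFinset (Sum.inr j)
      = Finset.univ.image Sum.inl := by
  ext (w | w) <;> simp [SimpleGraph.mem_neighborFinset]

lemma bip_deg_inl (i : Fin m) :
    (completeBipartiteGraph (Fin m) (Fin k)).degree (Sum.inl i) = k := by
  rw [← SimpleGraph.card_neighborFinset_eq_degree, bip_nbr_inl,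
    Finset.card_image_of_injective _ Sum.inr_injective, Finset.card_univ, Fintype.card_fin]

lemma bip_deg_inr (j : Fin k) :
    (completeBipartiteGraph (Fin m) (Fin k)).degree (Sum.inr j) = m := by
  rw [← SimpleGraph.card_neighborFinset_eq_degree, bip_nbr_inr,
    Finset.card_image_of_injective _ Sum.inl_injective, Finset.card_univ, Fintype.card_fin]

lemma bip_sum (a b : ℕ) :
    (∑ u : Fin m ⊕ Fin k, ∑ v ∈ (completeBipartiteGraph (Fin m) (Fin k)).neighborFinset u,
      (((completeBipartiteGraph (Fin m) (Fin k)).degree u - 1).choose a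
        * ((completeBipartiteGraph (Fin m) (Fin k)).degree v - 1).choose b))
      = Wnum (m + k) a b m := by
  rw [Fintype.sum_sum_type]
  have hl : ∀ i : Fin m,
      (∑ v ∈ (completeBipartiteGraph (Fin m) (Fin k)).neighborFinset (Sum.inl i),
        (((completeBipartiteGraph (Fin m) (Fin k)).degree (Sum.inl i) - 1).choose a
          * ((completeBipartiteGraph (Fin m) (Fin k)).degree v - 1).choose b))
      = k * ((k - 1).choose a * (m - 1).choose b) := by
    intro i
    rw [bip_nbr_inl, Finset.sum_image (fun x _ y _ h => Sum.inr_injective h)]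
    rw [Finset.sum_congr rfl (fun j _ => by rw [bip_deg_inl, bip_deg_inr])]
    rw [Finset.sum_const, Finset.card_univ, Fintype.card_fin, smul_eq_mul]
  have hr : ∀ j : Fin k,
      (∑ v ∈ (completeBipartiteGraph (Fin m) (Fin k)).neighborFinset (Sum.inr j),
        (((completeBipartiteGraph (Fin m) (Fin k)).degree (Sum.inr j) - 1).choose a
          * ((completeBipartiteGraph (Fin m) (Fin k)).degree v - 1).choose b))
      = m * ((m - 1).choose a * (k - 1).choose b) := by
    intro j
    rw [bip_nbr_inr, Finset.sum_image (fun x _ y _ h => Sum.inl_injective h)]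
    rw [Finset.sum_congr rfl (fun i _ => by rw [bip_deg_inr, bip_deg_inl])]
    rw [Finset.sum_const, Finset.card_univ, Fintype.card_fin, smul_eq_mul]
  rw [Finset.sum_congr rfl (fun i _ => hl i), Finset.sum_congr rfl (fun j _ => hr j)]
  rw [Finset.sum_const, Finset.sum_const, Finset.card_univ, Finset.card_univ,
    Fintype.card_fin, Fintype.card_fin, smul_eq_mul, smul_eq_mul]
  unfold Wnum
  have h1 : m + k - m = k := by omega
  rw [h1]
  ring
end bipartite
-- ############ triangle bridge ############
section bridge
variable {W : Type*} (G : SimpleGraph W)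

lemma not_contains_iff_TF : ¬ Contains (⊤ : SimpleGraph (Fin 3)) G ↔ TF G := by
  constructor
  · intro h x y z h1 h2 h3
    apply h
    refine ⟨⟨![x, y, z], ?_⟩, ?_⟩
    · intro p q hpq
      have hne : p ≠ q := by simpa using hpq
      fin_cases p <;> fin_cases q <;>
        first
        | exact absurd rfl hne
        | exact h1 | exact h2 | exact h3
        | exact G.adj_symm h1 | exact G.adj_symm h2 | exact G.adj_symm h3
    · intro p q hpq
      have e1 : x ≠ y := G.ne_of_adj h1
      have e2 : x ≠ z := G.ne_of_adj h2
      have e3 : y ≠ z := G.ne_of_adj h3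
      fin_cases p <;> fin_cases q <;> simp_all <;>
        first
        | rfl
        | exact absurd hpq e1 | exact absurd hpq e2 | exact absurd hpq e3
        | exact absurd hpq.symm e1 | exact absurd hpq.symm e2 | exact absurd hpq.symm e3
  · rintro htf ⟨f, hinj⟩
    have h01 : G.Adj (f 0) (f 1) := f.map_adj (by simp)
    have h02 : G.Adj (f 0) (f 2) := f.map_adj (by simp)
    have h12 : G.Adj (f 1) (f 2) := f.map_adj (by simp)
    exact htf h01 h02 h12
end bridge


/-- the double star `S_{a,b}` is weakly `K₃`-Turán-good. -/
theorem doubleStar_weakly_K3_turan_good (a b : ℕ) (ha : 0 < a) (hb : 0 < b) :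
    ∃ n₀ : ℕ, ∀ n ≥ n₀, ∃ m : ℕ, 1 ≤ m ∧ m ≤ n - 1 ∧
      exGen n (doubleStar a b) (⊤ : SimpleGraph (Fin 3)) =
        _root_.copyCount (doubleStar a b) (completeBipartiteGraph (Fin m) (Fin (n - m))) := by
  classical
  refine ⟨2, fun n hn => ?_⟩
  -- choose the best m
  obtain ⟨m₀, hm₀mem, hm₀max⟩ := Finset.exists_max_image (Finset.Icc 1 (n - 1))
    (fun m => Wnum n a b m) ⟨1, by rw [Finset.mem_Icc]; omega⟩
  rw [Finset.mem_Icc] at hm₀mem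
  obtain ⟨hm1, hm2⟩ := hm₀mem
  have hmn : m₀ + (n - m₀) = n := by omega
  set K := completeBipartiteGraph (Fin m₀) (Fin (n - m₀)) with hK
  set c := if a = b then 2 else 1 with hc
  have hcpos : 0 < c := by rw [hc]; split <;> norm_num
  -- counting for K
  have hcardK : Fintype.card (Fin m₀ ⊕ Fin (n - m₀)) = n := by simp [hmn]
  have hcntK : c * _root_.copyCount (DS a b) K = Wnum n a b m₀ := by
    rw [count_formula tf_bip ha hb, bip_sum a b, hmn]
  have hdsK : _root_.copyCount (doubleStar a b) K = _root_.copyCount (DS a b) K :=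
    copyCount_congr_left (dsIso a b) K
  set cnt := _root_.copyCount (doubleStar a b) K with hcnt
  -- the graph on Fin n
  have e : Fin m₀ ⊕ Fin (n - m₀) ≃ Fin n := finSumFinEquiv.trans (finCongr hmn)
  set Gstar : SimpleGraph (Fin n) := SimpleGraph.comap (⇑e.symm) K with hGstar
  have isoG : Gstar ≃g K := RelIso.mk e.symm (Iff.rfl)
  have htfG : TF Gstar := fun x y z h1 h2 h3 => tf_bip h1 h2 h3
  have hGcnt : _root_.copyCount (doubleStar a b) Gstar = cnt :=
    copyCount_congr_right (doubleStar a b) isoG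
  -- the upper bound for all triangle-free graphs on Fin n
  have hbound : ∀ N ∈ {N | ∃ G : SimpleGraph (Fin n), ¬ Contains (⊤ : SimpleGraph (Fin 3)) G ∧
      N = _root_.copyCount (doubleStar a b) G}, N ≤ cnt := by
    rintro N ⟨G, hGfree, rfl⟩
    have htf : TF G := (not_contains_iff_TF G).mp hGfree
    have hform := count_formula (G := G) htf ha hb
    have hle := sum_le_M (G := G) htf (by simp) (fun m hm => hm₀max m hm)
    have : c * _root_.copyCount (doubleStar a b) G ≤ Wnum n a b m₀ := by
      rw [copyCount_congr_left (dsIso a b) G, hform]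
      exact hle
    rw [← hcntK, ← hdsK] at this
    exact Nat.le_of_mul_le_mul_left this hcpos
  have hmem : cnt ∈ {N | ∃ G : SimpleGraph (Fin n), ¬ Contains (⊤ : SimpleGraph (Fin 3)) G ∧
      N = _root_.copyCount (doubleStar a b) G} :=
    ⟨Gstar, (not_contains_iff_TF Gstar).mpr htfG, hGcnt.symm⟩
  refine ⟨m₀, hm1, hm2, ?_⟩
  show sSup _ = cnt
  apply le_antisymm
  · exact csSup_le ⟨cnt, hmem⟩ hbound
  · exact le_csSup ⟨cnt, hbound⟩ hmem
end

section
/- Let c ≤ a ≤ b < d be positive integers. Then there is a constant k = k(a,b,c,d) such that for every positive integer n, ex(n, S_{a,b}, S_{c,d}) ≥ r·n − k. -/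
open SimpleGraph

open Finset

lemma doubleStar_adj {a b : ℕ} (x y : Fin (a + b + 2)) :
    (doubleStar a b).Adj x y ↔
      ((x.val = 0 ∧ y.val = 1) ∨ (y.val = 0 ∧ x.val = 1) ∨
        (x.val = 0 ∧ 2 ≤ y.val ∧ y.val < a + 2) ∨ (y.val = 0 ∧ 2 ≤ x.val ∧ x.val < a + 2) ∨
        (x.val = 1 ∧ a + 2 ≤ y.val) ∨ (y.val = 1 ∧ a + 2 ≤ x.val)) := by
  rw [doubleStar, SimpleGraph.fromRel_adj, ← Fin.val_ne_iff]
  constructor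
  · rintro ⟨hne, h | h⟩ <;> tauto
  · intro h
    exact ⟨by omega, by tauto⟩

def starRel {n : ℕ} (u v : Fin n) (A B : Finset (Fin n)) : Fin n → Fin n → Prop := fun p q =>
  (p = u ∧ q = v) ∨ (q = u ∧ p = v) ∨ (p = u ∧ q ∈ A) ∨ (q = u ∧ p ∈ A) ∨
    (p = v ∧ q ∈ B) ∨ (q = v ∧ p ∈ B)

def starSub {n : ℕ} (G : SimpleGraph (Fin n)) (u v : Fin n) (A B : Finset (Fin n)) :
    G.Subgraph where
  verts := {u, v} ∪ ↑A ∪ ↑B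
  Adj p q := starRel u v A B p q ∧ G.Adj p q
  adj_sub h := h.2
  edge_vert := by
    rintro p q ⟨⟨rfl, rfl⟩ | ⟨rfl, rfl⟩ | ⟨rfl, hq⟩ | ⟨rfl, hp⟩ | ⟨rfl, hq⟩ | ⟨rfl, hp⟩, -⟩ <;>
      simp_all
  symm := ⟨by
    rintro p q ⟨hr, hG⟩
    refine ⟨?_, hG.symm⟩
    unfold starRel at *
    tauto⟩

lemma starRel_sub {n : ℕ} {G : SimpleGraph (Fin n)} {u v : Fin n} {A B : Finset (Fin n)}
    (hadj : G.Adj u v) (hadjA : ∀ x ∈ A, G.Adj u x) (hadjB : ∀ y ∈ B, G.Adj v y)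
    {p q : Fin n} (h : starRel u v A B p q) : G.Adj p q := by
  rcases h with ⟨rfl, rfl⟩ | ⟨rfl, rfl⟩ | ⟨rfl, hq⟩ | ⟨rfl, hp⟩ | ⟨rfl, hq⟩ | ⟨rfl, hp⟩
  · exact hadj
  · exact hadj.symm
  · exact hadjA _ hq
  · exact (hadjA _ hp).symm
  · exact hadjB _ hq
  · exact (hadjB _ hp).symm

lemma starSub_iso (a b : ℕ) (ha : 1 ≤ a) (hb : 1 ≤ b) {n : ℕ} (G : SimpleGraph (Fin n))
    (u v : Fin n) (A B : Finset (Fin n))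
    (hadj : G.Adj u v) (hcA : A.card = a) (hcB : B.card = b)
    (hadjA : ∀ x ∈ A, G.Adj u x) (hadjB : ∀ y ∈ B, G.Adj v y)
    (hvA : v ∉ A) (huB : u ∉ B) (hdisj : Disjoint A B) :
    Nonempty (doubleStar a b ≃g (starSub G u v A B).coe) := by
  classical
  have hne : u ≠ v := hadj.ne
  have huA : u ∉ A := fun h => (hadjA u h).ne rfl
  have hvB : v ∉ B := fun h => (hadjB v h).ne rfl
  set eA := A.orderIsoOfFin hcA with heA
  set eB := B.orderIsoOfFin hcB with heB
  set f : Fin (a + b + 2) → Fin n := fun x =>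
    if x.val = 0 then u
    else if x.val = 1 then v
    else if h : x.val < a + 2 then (eA ⟨x.val - 2, by omega⟩).1
    else (eB ⟨x.val - (a + 2), by have := x.isLt; omega⟩).1 with hf
  have hf0 : ∀ x : Fin (a + b + 2), x.val = 0 → f x = u := by
    intro x hx; simp only [hf]; rw [if_pos hx]
  have hf1 : ∀ x : Fin (a + b + 2), x.val = 1 → f x = v := by
    intro x hx; simp only [hf]; rw [if_neg (by omega), if_pos hx]
  have hfA : ∀ (x : Fin (a + b + 2)) (h2 : 2 ≤ x.val) (hl : x.val < a + 2),
      f x = (eA ⟨x.val - 2, by omega⟩).1 := by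
    intro x h2 hl
    simp only [hf]
    rw [if_neg (by omega), if_neg (by omega), dif_pos hl]
  have hfB : ∀ (x : Fin (a + b + 2)) (h2 : a + 2 ≤ x.val),
      f x = (eB ⟨x.val - (a + 2), by have := x.isLt; omega⟩).1 := by
    intro x h2
    simp only [hf]
    rw [if_neg (by omega), if_neg (by omega), dif_neg (by omega)]
  have hmA : ∀ (x : Fin (a + b + 2)), 2 ≤ x.val → x.val < a + 2 → f x ∈ A := by
    intro x h2 hl; rw [hfA x h2 hl]; exact (eA _).2
  have hmB : ∀ (x : Fin (a + b + 2)), a + 2 ≤ x.val → f x ∈ B := by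
    intro x h2; rw [hfB x h2]; exact (eB _).2
  have trich : ∀ x : Fin (a + b + 2),
      x.val = 0 ∨ x.val = 1 ∨ (2 ≤ x.val ∧ x.val < a + 2) ∨ a + 2 ≤ x.val := by
    intro x; omega
  have inv_u : ∀ x, f x = u → x.val = 0 := by
    intro x hx
    rcases trich x with h | h | ⟨h2, hl⟩ | h
    · exact h
    · rw [hf1 x h] at hx; exact absurd hx.symm hne
    · exact absurd (hx ▸ hmA x h2 hl) huA
    · exact absurd (hx ▸ hmB x h) huB
  have inv_v : ∀ x, f x = v → x.val = 1 := by
    intro x hx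
    rcases trich x with h | h | ⟨h2, hl⟩ | h
    · rw [hf0 x h] at hx; exact absurd hx hne
    · exact h
    · exact absurd (hx ▸ hmA x h2 hl) hvA
    · exact absurd (hx ▸ hmB x h) hvB
  have inv_A : ∀ x, f x ∈ A → 2 ≤ x.val ∧ x.val < a + 2 := by
    intro x hx
    rcases trich x with h | h | ⟨h2, hl⟩ | h
    · rw [hf0 x h] at hx; exact absurd hx huA
    · rw [hf1 x h] at hx; exact absurd hx hvA
    · exact ⟨h2, hl⟩
    · exact absurd hx (Finset.disjoint_right.1 hdisj (hmB x h))
  have inv_B : ∀ x, f x ∈ B → a + 2 ≤ x.val := by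
    intro x hx
    rcases trich x with h | h | ⟨h2, hl⟩ | h
    · rw [hf0 x h] at hx; exact absurd hx huB
    · rw [hf1 x h] at hx; exact absurd hx hvB
    · exact absurd hx (Finset.disjoint_left.1 hdisj (hmA x h2 hl))
    · exact h
  have finj : Function.Injective f := by
    intro x y hxy
    apply Fin.val_injective
    rcases trich x with h | h | ⟨h2, hl⟩ | h <;> rcases trich y with h' | h' | ⟨h2', hl'⟩ | h'
    · omega
    · rw [hf0 x h, hf1 y h'] at hxy; exact absurd hxy hne
    · rw [hf0 x h] at hxy
      exact absurd (by rw [hxy]; exact hmA y h2' hl' : u ∈ A) huA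
    · rw [hf0 x h] at hxy
      exact absurd (by rw [hxy]; exact hmB y h' : u ∈ B) huB
    · rw [hf1 x h, hf0 y h'] at hxy; exact absurd hxy.symm hne
    · omega
    · rw [hf1 x h] at hxy
      exact absurd (by rw [hxy]; exact hmA y h2' hl' : v ∈ A) hvA
    · rw [hf1 x h] at hxy
      exact absurd (by rw [hxy]; exact hmB y h' : v ∈ B) hvB
    · rw [hf0 y h'] at hxy
      exact absurd (by rw [← hxy]; exact hmA x h2 hl : u ∈ A) huA
    · rw [hf1 y h'] at hxy
      exact absurd (by rw [← hxy]; exact hmA x h2 hl : v ∈ A) hvA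
    · rw [hfA x h2 hl, hfA y h2' hl'] at hxy
      have h3 := congrArg Fin.val (eA.injective (Subtype.ext hxy))
      simp only [] at h3
      omega
    · have hx1 := hmA x h2 hl
      rw [hxy] at hx1
      exact absurd (hmB y h') (Finset.disjoint_left.1 hdisj hx1)
    · rw [hf0 y h'] at hxy
      exact absurd (by rw [← hxy]; exact hmB x h : u ∈ B) huB
    · rw [hf1 y h'] at hxy
      exact absurd (by rw [← hxy]; exact hmB x h : v ∈ B) hvB
    · have hx1 := hmB x h
      rw [hxy] at hx1
      exact absurd (hmA y h2' hl') (Finset.disjoint_right.1 hdisj hx1)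
    · rw [hfB x h, hfB y h'] at hxy
      have h3 := congrArg Fin.val (eB.injective (Subtype.ext hxy))
      simp only [] at h3
      omega
  have hrange : Set.range f = (starSub G u v A B).verts := by
    show Set.range f = ({u, v} : Set (Fin n)) ∪ ↑A ∪ ↑B
    apply Set.eq_of_subset_of_subset
    · rintro z ⟨x, rfl⟩
      rcases trich x with h | h | ⟨h2, hl⟩ | h
      · rw [hf0 x h]; left; left; left; rfl
      · rw [hf1 x h]; left; left; right; rfl
      · left; right; exact hmA x h2 hl
      · right; exact hmB x h
    · intro z hz
      simp only [Set.mem_union, Set.mem_insert_iff, Set.mem_singleton_iff,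
        Finset.mem_coe] at hz
      rcases hz with ((hz | hz) | hz) | hz
      · exact ⟨⟨0, by omega⟩, by rw [hf0 ⟨0, by omega⟩ rfl]; exact hz.symm⟩
      · exact ⟨⟨1, by omega⟩, by rw [hf1 ⟨1, by omega⟩ rfl]; exact hz.symm⟩
      · -- z ∈ A
        set i := eA.symm ⟨z, hz⟩ with hi
        refine ⟨⟨i.val + 2, by have := i.isLt; omega⟩, ?_⟩
        rw [hfA ⟨i.val + 2, by have := i.isLt; omega⟩ (by simp) (by have := i.isLt; simp only [Fin.val_mk]; omega)]
        have : (⟨(i.val + 2) - 2, by have := i.isLt; omega⟩ : Fin a) = i := by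
          apply Fin.val_injective; simp
        rw [this, hi]
        simp
      · set i := eB.symm ⟨z, hz⟩ with hi
        refine ⟨⟨i.val + (a + 2), by have := i.isLt; omega⟩, ?_⟩
        rw [hfB ⟨i.val + (a + 2), by have := i.isLt; omega⟩ (by simp)]
        have : (⟨(i.val + (a + 2)) - (a + 2), by have := i.isLt; omega⟩ : Fin b) = i := by
          apply Fin.val_injective; simp
        rw [this, hi]
        simp
  have hiff : ∀ x y : Fin (a + b + 2),
      (doubleStar a b).Adj x y ↔ starRel u v A B (f x) (f y) := by
    intro x y
    rw [doubleStar_adj]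
    constructor
    · rintro (⟨hx, hy⟩ | ⟨hy, hx⟩ | ⟨hx, hy1, hy2⟩ | ⟨hy, hx1, hx2⟩ | ⟨hx, hy⟩ | ⟨hy, hx⟩)
      · exact Or.inl ⟨hf0 x hx, hf1 y hy⟩
      · exact Or.inr (Or.inl ⟨hf0 y hy, hf1 x hx⟩)
      · exact Or.inr (Or.inr (Or.inl ⟨hf0 x hx, hmA y hy1 hy2⟩))
      · exact Or.inr (Or.inr (Or.inr (Or.inl ⟨hf0 y hy, hmA x hx1 hx2⟩)))
      · exact Or.inr (Or.inr (Or.inr (Or.inr (Or.inl ⟨hf1 x hx, hmB y hy⟩))))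
      · exact Or.inr (Or.inr (Or.inr (Or.inr (Or.inr ⟨hf1 y hy, hmB x hx⟩))))
    · rintro (⟨hx, hy⟩ | ⟨hy, hx⟩ | ⟨hx, hy⟩ | ⟨hy, hx⟩ | ⟨hx, hy⟩ | ⟨hy, hx⟩)
      · exact Or.inl ⟨inv_u x hx, inv_v y hy⟩
      · exact Or.inr (Or.inl ⟨inv_u y hy, inv_v x hx⟩)
      · exact Or.inr (Or.inr (Or.inl ⟨inv_u x hx, (inv_A y hy).1, (inv_A y hy).2⟩))
      · exact Or.inr (Or.inr (Or.inr (Or.inl ⟨inv_u y hy, (inv_A x hx).1, (inv_A x hx).2⟩)))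
      · exact Or.inr (Or.inr (Or.inr (Or.inr (Or.inl ⟨inv_v x hx, inv_B y hy⟩))))
      · exact Or.inr (Or.inr (Or.inr (Or.inr (Or.inr ⟨inv_v y hy, inv_B x hx⟩))))
  refine ⟨{ toEquiv := (Equiv.ofInjective f finj).trans (Equiv.setCongr hrange),
            map_rel_iff' := ?_ }⟩
  intro x y
  rw [Equiv.trans_apply, Equiv.trans_apply]
  rw [SimpleGraph.Subgraph.coe_adj]
  show (starSub G u v A B).Adj (f x) (f y) ↔ _
  constructor
  · rintro ⟨hr, -⟩
    exact (hiff x y).2 hr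
  · intro h
    exact ⟨(hiff x y).1 h, starRel_sub hadj hadjA hadjB ((hiff x y).1 h)⟩
section inj
variable {n : ℕ} {u v : Fin n} {A B : Finset (Fin n)}

/-- In `starRel`, a vertex with two distinct neighbours is a centre. -/
lemma starRel_center (hne : u ≠ v) (hdisj : Disjoint A B)
    {p x1 x2 : Fin n} (h1 : starRel u v A B p x1) (h2 : starRel u v A B p x2)
    (hx : x1 ≠ x2) : p = u ∨ p = v := by
  by_contra hp
  push_neg at hp
  obtain ⟨hpu, hpv⟩ := hp
  have key : ∀ x, starRel u v A B p x → (x = u ∧ p ∈ A) ∨ (x = v ∧ p ∈ B) := by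
    intro x hx'
    rcases hx' with ⟨h, -⟩ | ⟨-, h⟩ | ⟨h, -⟩ | ⟨h', h⟩ | ⟨h, -⟩ | ⟨h', h⟩ <;> tauto
  rcases key x1 h1 with ⟨rfl, hA1⟩ | ⟨rfl, hB1⟩ <;> rcases key x2 h2 with ⟨rfl, hA2⟩ | ⟨rfl, hB2⟩
  · exact hx rfl
  · exact Finset.disjoint_left.1 hdisj hA1 hB2
  · exact Finset.disjoint_left.1 hdisj hA2 hB1
  · exact hx rfl

lemma starRel_nbr_u (hne : u ≠ v) (huA : u ∉ A) (huB : u ∉ B) {x : Fin n} :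
    starRel u v A B u x ↔ (x = v ∨ x ∈ A) := by
  constructor
  · rintro (⟨-, h⟩ | ⟨h, h'⟩ | ⟨-, h⟩ | ⟨h, h'⟩ | ⟨h, h'⟩ | ⟨h, h'⟩) <;> tauto
  · rintro (rfl | h)
    · exact Or.inl ⟨rfl, rfl⟩
    · exact Or.inr (Or.inr (Or.inl ⟨rfl, h⟩))

lemma starRel_nbr_v (hne : u ≠ v) (hvA : v ∉ A) (hvB : v ∉ B) {x : Fin n} :
    starRel u v A B v x ↔ (x = u ∨ x ∈ B) := by
  constructor
  · rintro (⟨h, h'⟩ | ⟨h, -⟩ | ⟨h, h'⟩ | ⟨h, h'⟩ | ⟨-, h⟩ | ⟨h, h'⟩) <;> tauto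
  · rintro (rfl | h)
    · exact Or.inr (Or.inl ⟨rfl, rfl⟩)
    · exact Or.inr (Or.inr (Or.inr (Or.inr (Or.inl ⟨rfl, h⟩))))

lemma starRel_inj (a b : ℕ) (ha : 1 ≤ a) (hab : a ≤ b)
    {u' v' : Fin n} {A' B' : Finset (Fin n)}
    (hne : u ≠ v) (hcA : A.card = a) (hcB : B.card = b)
    (huA : u ∉ A) (hvA : v ∉ A) (huB : u ∉ B) (hvB : v ∉ B) (hdisj : Disjoint A B)
    (hlt : a = b → u < v)
    (hne' : u' ≠ v') (hcA' : A'.card = a) (hcB' : B'.card = b)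
    (huA' : u' ∉ A') (hvA' : v' ∉ A') (huB' : u' ∉ B') (hvB' : v' ∉ B')
    (hdisj' : Disjoint A' B') (hlt' : a = b → u' < v')
    (hR : ∀ p q, starRel u v A B p q ↔ starRel u' v' A' B' p q) :
    u = u' ∧ v = v' ∧ A = A' ∧ B = B' := by
  obtain ⟨x1, hx1⟩ : A'.Nonempty := Finset.card_pos.1 (by omega)
  obtain ⟨y1, hy1⟩ : B'.Nonempty := Finset.card_pos.1 (by omega)
  -- u' is a centre of starRel u v A B
  have hu'uv : u' = u ∨ u' = v := by
    refine starRel_center hne hdisj ((hR _ _).2 ?_) ((hR _ _).2 ?_) (?_ : v' ≠ x1)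
    · exact Or.inl ⟨rfl, rfl⟩
    · exact Or.inr (Or.inr (Or.inl ⟨rfl, hx1⟩))
    · rintro rfl; exact hvA' hx1
  have hv'uv : v' = u ∨ v' = v := by
    refine starRel_center hne hdisj ((hR _ _).2 ?_) ((hR _ _).2 ?_) (?_ : u' ≠ y1)
    · exact Or.inr (Or.inl ⟨rfl, rfl⟩)
    · exact Or.inr (Or.inr (Or.inr (Or.inr (Or.inl ⟨rfl, hy1⟩))))
    · rintro rfl; exact huB' hy1
  -- characterisations of A, B, A', B'
  have hAchar : ∀ x, x ∈ A ↔ (starRel u v A B u x ∧ x ≠ v) := by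
    intro x
    rw [starRel_nbr_u hne huA huB]
    constructor
    · intro h; exact ⟨Or.inr h, fun hxv => hvA (hxv ▸ h)⟩
    · rintro ⟨rfl | h, hxv⟩
      · exact absurd rfl hxv
      · exact h
  have hBchar : ∀ x, x ∈ B ↔ (starRel u v A B v x ∧ x ≠ u) := by
    intro x
    rw [starRel_nbr_v hne hvA hvB]
    constructor
    · intro h; exact ⟨Or.inr h, fun hxu => huB (hxu ▸ h)⟩
    · rintro ⟨rfl | h, hxu⟩
      · exact absurd rfl hxu
      · exact h
  have hAchar' : ∀ x, x ∈ A' ↔ (starRel u' v' A' B' u' x ∧ x ≠ v') := by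
    intro x
    rw [starRel_nbr_u hne' huA' huB']
    constructor
    · intro h; exact ⟨Or.inr h, fun hxv => hvA' (hxv ▸ h)⟩
    · rintro ⟨rfl | h, hxv⟩
      · exact absurd rfl hxv
      · exact h
  have hBchar' : ∀ x, x ∈ B' ↔ (starRel u' v' A' B' v' x ∧ x ≠ u') := by
    intro x
    rw [starRel_nbr_v hne' hvA' hvB']
    constructor
    · intro h; exact ⟨Or.inr h, fun hxu => huB' (hxu ▸ h)⟩
    · rintro ⟨rfl | h, hxu⟩
      · exact absurd rfl hxu
      · exact h
  rcases hu'uv with rfl | hu'v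
  · -- u' = u
    rcases hv'uv with hv'u | rfl
    · simp_all
    · -- v' = v
      refine ⟨rfl, rfl, ?_, ?_⟩
      · ext x
        rw [hAchar x, hAchar' x, hR]
      · ext x
        rw [hBchar x, hBchar' x, hR]
  · -- u' = v, so v' = u and A' = B, contradiction with cards
    subst hu'v
    rcases hv'uv with rfl | hv'v
    · have hAB : A' = B := by
        ext x
        rw [hAchar' x, ← hR, ← hBchar x]
      have hab' : a = b := by rw [← hcA', hAB, hcB]
      exact absurd (lt_trans (hlt hab') (hlt' hab')) (lt_irrefl _)
    · simp_all

instance subgraphFinite {n : ℕ} (G : SimpleGraph (Fin n)) : Finite G.Subgraph := by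
  apply Finite.of_injective (fun G' => (G'.verts, G'.Adj))
  intro x y h
  exact SimpleGraph.Subgraph.ext (congrArg Prod.fst h) (congrArg Prod.snd h)

noncomputable def dataFinset (a b : ℕ) {n : ℕ} (G : SimpleGraph (Fin n)) :
    Finset ((Fin n × Fin n) × Finset (Fin n) × Finset (Fin n)) := by
  classical
  exact Finset.univ.filter fun q =>
    G.Adj q.1.1 q.1.2 ∧ (a = b → q.1.1 < q.1.2) ∧ q.2.1.card = a ∧ q.2.2.card = b ∧
    (∀ x ∈ q.2.1, G.Adj q.1.1 x) ∧ (∀ y ∈ q.2.2, G.Adj q.1.2 y) ∧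
    q.1.2 ∉ q.2.1 ∧ q.1.1 ∉ q.2.2 ∧ Disjoint q.2.1 q.2.2

lemma mem_dataFinset {a b n : ℕ} {G : SimpleGraph (Fin n)}
    {q : (Fin n × Fin n) × Finset (Fin n) × Finset (Fin n)} (hq : q ∈ dataFinset a b G) :
    G.Adj q.1.1 q.1.2 ∧ (a = b → q.1.1 < q.1.2) ∧ q.2.1.card = a ∧ q.2.2.card = b ∧
    (∀ x ∈ q.2.1, G.Adj q.1.1 x) ∧ (∀ y ∈ q.2.2, G.Adj q.1.2 y) ∧
    q.1.2 ∉ q.2.1 ∧ q.1.1 ∉ q.2.2 ∧ Disjoint q.2.1 q.2.2 := by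
  classical
  simp only [dataFinset, Finset.mem_filter] at hq
  convert hq.2 using 2

lemma dataFinset_card_le_copyCount (a b : ℕ) (ha : 1 ≤ a) (hab : a ≤ b) {n : ℕ}
    (G : SimpleGraph (Fin n)) :
    (dataFinset a b G).card ≤
      Set.ncard {G' : G.Subgraph | Nonempty (doubleStar a b ≃g G'.coe)} := by
  classical
  set S : Set G.Subgraph := {G' | Nonempty (doubleStar a b ≃g G'.coe)} with hS
  set Φ : ((Fin n × Fin n) × Finset (Fin n) × Finset (Fin n)) → G.Subgraph :=
    fun q => starSub G q.1.1 q.1.2 q.2.1 q.2.2 with hΦ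
  have himg : ∀ q ∈ dataFinset a b G, Φ q ∈ S := by
    rintro ⟨⟨u, v⟩, A, B⟩ hq
    obtain ⟨hadj, hlt, hcA, hcB, hadjA, hadjB, hvA, huB, hdisj⟩ := mem_dataFinset hq
    exact starSub_iso a b ha (le_trans ha hab) G u v A B hadj hcA hcB hadjA hadjB hvA huB hdisj
  have hinjOn : Set.InjOn Φ ↑(dataFinset a b G) := by
    rintro ⟨⟨u, v⟩, A, B⟩ hq ⟨⟨u', v'⟩, A', B'⟩ hq' heq
    obtain ⟨hadj, hlt, hcA, hcB, hadjA, hadjB, hvA, huB, hdisj⟩ :=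
      mem_dataFinset (Finset.mem_coe.1 hq)
    obtain ⟨hadj', hlt', hcA', hcB', hadjA', hadjB', hvA', huB', hdisj'⟩ :=
      mem_dataFinset (Finset.mem_coe.1 hq')
    have hAdj := congrArg SimpleGraph.Subgraph.Adj heq
    have hRR : ∀ p r, starRel u v A B p r ↔ starRel u' v' A' B' p r := by
      intro p r
      have h2 := congrFun (congrFun hAdj p) r
      simp only [hΦ, starSub] at h2
      constructor
      · intro h
        exact (h2 ▸ ⟨h, starRel_sub hadj hadjA hadjB h⟩ :
          starRel u' v' A' B' p r ∧ G.Adj p r).1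
      · intro h
        exact (h2 ▸ ⟨h, starRel_sub hadj' hadjA' hadjB' h⟩ :
          starRel u v A B p r ∧ G.Adj p r).1
    obtain ⟨h1, h2, h3, h4⟩ := starRel_inj a b ha hab hadj.ne hcA hcB
      (fun h => (hadjA u h).ne rfl) hvA huB (fun h => (hadjB v h).ne rfl) hdisj hlt
      hadj'.ne hcA' hcB' (fun h => (hadjA' u' h).ne rfl) hvA' huB'
      (fun h => (hadjB' v' h).ne rfl) hdisj' hlt' hRR
    subst h1; subst h2; subst h3; subst h4
    rfl
  rw [← Set.ncard_coe_finset, ← Set.ncard_image_of_injOn hinjOn]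
  exact Set.ncard_le_ncard (by rintro s ⟨q, hq, rfl⟩; exact himg q hq) (Set.toFinite S)
lemma count_le_dataFinset (a b : ℕ) {n : ℕ} (G : SimpleGraph (Fin n))
    (pairs : Finset (Fin n × Fin n))
    (Afam : Fin n × Fin n → Finset (Fin n))
    (Bfam : Fin n × Fin n → Finset (Fin n) → Finset (Fin n)) (α β : ℕ)
    (hpair : ∀ p ∈ pairs, G.Adj p.1 p.2 ∧ (a = b → p.1 < p.2))
    (hA : ∀ p ∈ pairs, ∀ x ∈ Afam p, G.Adj p.1 x ∧ x ≠ p.2)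
    (hB : ∀ p ∈ pairs, ∀ A ⊆ Afam p, ∀ y ∈ Bfam p A, G.Adj p.2 y ∧ y ≠ p.1 ∧ y ∉ A)
    (hcardA : ∀ p ∈ pairs, (Afam p).card = α)
    (hcardB : ∀ p ∈ pairs, ∀ A ⊆ Afam p, A.card = a → (Bfam p A).card = β) :
    pairs.card * (α.choose a * β.choose b) ≤ (dataFinset a b G).card := by
  classical
  set SS : Finset (Σ _p : Fin n × Fin n, Σ _A : Finset (Fin n), Finset (Fin n)) :=
    pairs.sigma (fun p => ((Afam p).powersetCard a).sigma
      (fun A => (Bfam p A).powersetCard b)) with hSS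
  have hcard : SS.card = pairs.card * (α.choose a * β.choose b) := by
    rw [hSS, Finset.card_sigma]
    rw [Finset.sum_congr rfl (fun p hp => ?_), Finset.sum_const, smul_eq_mul]
    rw [Finset.card_sigma]
    rw [Finset.sum_congr rfl (fun A hA' => ?_), Finset.sum_const, smul_eq_mul,
      Finset.card_powersetCard, hcardA p hp]
    rw [Finset.card_powersetCard]
    obtain ⟨hsub, hcA⟩ := Finset.mem_powersetCard.1 hA'
    rw [hcardB p hp A hsub hcA]
  rw [← hcard]
  apply Finset.card_le_card_of_injOn (fun s => (s.1, s.2.1, s.2.2))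
  · rintro ⟨p, A, B⟩ hs
    simp only [Finset.mem_coe, Finset.mem_sigma, hSS] at hs
    obtain ⟨hp, hA', hB'⟩ := hs
    obtain ⟨hAsub, hAcard⟩ := Finset.mem_powersetCard.1 hA'
    obtain ⟨hBsub, hBcard⟩ := Finset.mem_powersetCard.1 hB'
    simp only [Finset.mem_coe, dataFinset, Finset.mem_filter, Finset.mem_univ, true_and]
    refine ⟨(hpair p hp).1, (hpair p hp).2, hAcard, hBcard, ?_, ?_, ?_, ?_, ?_⟩
    · exact fun x hx => (hA p hp x (hAsub hx)).1
    · exact fun y hy => (hB p hp A hAsub y (hBsub hy)).1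
    · intro hmem
      exact (hA p hp p.2 (hAsub hmem)).2 rfl
    · intro hmem
      exact (hB p hp A hAsub p.1 (hBsub hmem)).2.1 rfl
    · rw [Finset.disjoint_left]
      intro x hxA hxB
      exact (hB p hp A hAsub x (hBsub hxB)).2.2 hxA
  · rintro ⟨p, A, B⟩ - ⟨p', A', B'⟩ - h
    simp only [Prod.mk.injEq] at h
    obtain ⟨h1, h2, h3⟩ := h
    subst h1; subst h2; subst h3
    rfl

/-! interval utilities -/

lemma div_mod_char {m t y : ℕ} (hm : 0 < m) (h : y / m = t) :
    t * m ≤ y ∧ y < t * m + m ∧ y % m = y - t * m := by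
  have h1 := Nat.div_add_mod y m
  have h2 := Nat.mod_lt y hm
  rw [h, Nat.mul_comm m t] at h1
  omega

lemma div_of_bounds {m t y : ℕ} (hm : 0 < m) (h1 : t * m ≤ y) (h2 : y < t * m + m) :
    y / m = t := by
  apply Nat.div_eq_of_lt_le h1
  rw [Nat.succ_mul]
  exact h2

lemma interval_card_le (n lo w : ℕ) :
    ((Finset.univ : Finset (Fin n)).filter fun y => lo ≤ y.val ∧ y.val < lo + w).card ≤ w := by
  have h := Finset.card_le_card_of_injOn (fun y : Fin n => y.val)
    (s := (Finset.univ : Finset (Fin n)).filter fun y => lo ≤ y.val ∧ y.val < lo + w)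
    (t := Finset.Ico lo (lo + w))
    (fun y hy => by
      simp only [Finset.mem_coe, Finset.mem_filter] at hy
      simp only [Finset.mem_coe, Finset.mem_Ico]
      exact hy.2)
    (fun x _ y _ h => Fin.val_injective h)
  simpa using h

lemma interval_card_eq (n lo w : ℕ) (h : lo + w ≤ n) :
    ((Finset.univ : Finset (Fin n)).filter fun y => lo ≤ y.val ∧ y.val < lo + w).card = w := by
  have key : ((Finset.univ : Finset (Fin n)).filter fun y => lo ≤ y.val ∧ y.val < lo + w).card
      = (Finset.range w).card := by
    apply Finset.card_bij' (i := fun y _ => y.val - lo) (j := fun i hi => (⟨lo + i, by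
    simp only [Finset.mem_range] at hi; omega⟩ : Fin n))
    all_goals intro x hx
    all_goals simp only [Finset.mem_filter, Finset.mem_univ, true_and, Finset.mem_range,
      Fin.ext_iff, Fin.val_mk] at hx ⊢
    all_goals omega
  rw [key, Finset.card_range]

/-- pairs `u < v` in the off-diagonal: counted twice. -/
lemma two_mul_card_filter_lt {α : Type*} [LinearOrder α] [DecidableEq α] (s : Finset α) :
    2 * ((s.offDiag.filter fun p => p.1 < p.2).card) = s.card * s.card - s.card := by
  classical
  have hsplit : s.offDiag.filter (fun p => p.1 < p.2) ∪ s.offDiag.filter (fun p => p.2 < p.1)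
      = s.offDiag := by
    ext p
    simp only [Finset.mem_union, Finset.mem_filter, Finset.mem_offDiag]
    constructor
    · tauto
    · intro h
      rcases lt_or_gt_of_ne h.2.2 with h' | h' <;> tauto
  have hdisj : Disjoint (s.offDiag.filter fun p => p.1 < p.2)
      (s.offDiag.filter fun p => p.2 < p.1) := by
    rw [Finset.disjoint_left]
    intro p hp hp'
    simp only [Finset.mem_filter] at hp hp'
    exact absurd hp'.2 (not_lt.2 (le_of_lt hp.2))
  have hswap : (s.offDiag.filter fun p => p.1 < p.2).card
      = (s.offDiag.filter fun p => p.2 < p.1).card := by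
    refine Finset.card_bij' (fun p _ => (p.2, p.1)) (fun p _ => (p.2, p.1)) ?_ ?_ ?_ ?_
    · intro p hp
      simp only [Finset.mem_filter, Finset.mem_offDiag] at hp ⊢
      tauto
    · intro p hp
      simp only [Finset.mem_filter, Finset.mem_offDiag] at hp ⊢
      tauto
    · intro p _; rfl
    · intro p _; rfl
  have := Finset.card_union_of_disjoint hdisj
  rw [hsplit] at this
  rw [Finset.offDiag_card] at this
  omega

/-! ### The clique construction -/

def cliqueGraph (m n : ℕ) : SimpleGraph (Fin n) where
  Adj x y := x ≠ y ∧ x.val / m = y.val / m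
  symm := ⟨by rintro x y ⟨h1, h2⟩; exact ⟨h1.symm, h2.symm⟩⟩
  loopless := ⟨fun x h => h.1 rfl⟩

/-- block of `t` as a finset -/
def blockF (m n t : ℕ) : Finset (Fin n) :=
  Finset.univ.filter fun y => y.val / m = t

lemma blockF_eq (m n t : ℕ) (hm : 0 < m) : blockF m n t
    = (Finset.univ : Finset (Fin n)).filter fun y => t * m ≤ y.val ∧ y.val < t * m + m := by
  unfold blockF
  ext y
  simp only [Finset.mem_filter, Finset.mem_univ, true_and]
  constructor
  · intro h
    exact ⟨(div_mod_char hm h).1, (div_mod_char hm h).2.1⟩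
  · intro h
    exact div_of_bounds hm h.1 h.2

lemma blockF_card_le (m n t : ℕ) (hm : 0 < m) : (blockF m n t).card ≤ m := by
  rw [blockF_eq m n t hm]
  exact interval_card_le n (t * m) m

lemma blockF_card_eq (m n t : ℕ) (hm : 0 < m) (h : (t + 1) * m ≤ n) :
    (blockF m n t).card = m := by
  rw [blockF_eq m n t hm]
  exact interval_card_eq n (t * m) m (by have h1 := Nat.add_mul t 1 m; have h2 := Nat.one_mul m; omega)

lemma cliqueGraph_free (c d m n : ℕ) (hm : 0 < m) (hmle : m ≤ c + d + 1) :
    ¬ Contains (doubleStar c d) (cliqueGraph m n) := by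
  classical
  rintro ⟨f, hf⟩
  set z : Fin (c + d + 2) := ⟨0, by omega⟩ with hz
  set one : Fin (c + d + 2) := ⟨1, by omega⟩ with hone
  have hadj_block : ∀ {x y : Fin (c + d + 2)}, (doubleStar c d).Adj x y →
      (f x).val / m = (f y).val / m := fun h => (f.map_adj h).2
  have key : ∀ x : Fin (c + d + 2), (f x).val / m = (f z).val / m := by
    intro x
    have h01 : (doubleStar c d).Adj z one := by
      rw [doubleStar_adj]; left; exact ⟨rfl, rfl⟩
    rcases (by omega : x.val = 0 ∨ x.val = 1 ∨ (2 ≤ x.val ∧ x.val < c + 2) ∨ c + 2 ≤ x.val)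
      with h | h | ⟨h2, hl⟩ | h
    · have : x = z := Fin.val_injective h
      rw [this]
    · have hx : (doubleStar c d).Adj z x := by
        rw [doubleStar_adj]; left; exact ⟨rfl, h⟩
      exact (hadj_block hx).symm
    · have hx : (doubleStar c d).Adj z x := by
        rw [doubleStar_adj]; right; right; left; exact ⟨rfl, h2, hl⟩
      exact (hadj_block hx).symm
    · have hx : (doubleStar c d).Adj one x := by
        rw [doubleStar_adj]; right; right; right; right; left; exact ⟨rfl, h⟩
      exact ((hadj_block hx).symm.trans (hadj_block h01).symm)
  set t := (f z).val / m with ht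
  have hcard : (Finset.univ : Finset (Fin (c + d + 2))).card ≤ (blockF m n t).card := by
    apply Finset.card_le_card_of_injOn f
    · intro x _
      unfold blockF
      simp only [Finset.mem_coe, Finset.mem_filter, Finset.mem_univ, true_and]
      exact key x
    · exact fun x _ y _ h => hf h
  rw [Finset.card_univ, Fintype.card_fin] at hcard
  have := blockF_card_le m n t hm
  omega

def cliqPairCount (a b m : ℕ) : ℕ := if a = b then (m * m - m) / 2 else m * m - m

lemma msq_even (m : ℕ) : 2 ∣ (m * m - m) := by
  rcases Nat.eq_zero_or_pos m with rfl | hm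
  · simp
  · have h2 : m * m - m = (m - 1) * m := by
      rw [Nat.sub_mul, Nat.one_mul]
    rw [h2]
    have h3 := Nat.even_mul_succ_self (m - 1)
    have h4 : (m - 1) + 1 = m := by omega
    rw [h4] at h3
    exact h3.two_dvd

lemma cliqPairCount_spec (a b m : ℕ) (hab : a = b) :
    2 * cliqPairCount a b m = m * m - m := by
  unfold cliqPairCount
  rw [if_pos hab]
  have := msq_even m
  omega

def cliquePairs (a b m n : ℕ) : Finset (Fin n × Fin n) :=
  (Finset.range (n / m)).biUnion fun t =>
    ((blockF m n t).offDiag).filter fun p => a = b → p.1 < p.2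

lemma mem_blockF {m n t : ℕ} {y : Fin n} : y ∈ blockF m n t ↔ y.val / m = t := by
  unfold blockF
  simp

lemma cliquePairs_card (a b m n : ℕ) (hm : 0 < m) :
    (cliquePairs a b m n).card = (n / m) * cliqPairCount a b m := by
  unfold cliquePairs
  rw [Finset.card_biUnion]
  · rw [Finset.sum_congr rfl (fun t ht => ?_), Finset.sum_const, smul_eq_mul,
      Finset.card_range]
    have hfull : (t + 1) * m ≤ n := by
      simp only [Finset.mem_range] at ht
      have h1 : t + 1 ≤ n / m := by omega
      have h2 := Nat.mul_le_mul_right m h1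
      have h3 := Nat.div_mul_le_self n m
      omega
    have hbc := blockF_card_eq m n t hm hfull
    by_cases hab : a = b
    · have heq : ((blockF m n t).offDiag).filter (fun p => a = b → p.1 < p.2)
          = ((blockF m n t).offDiag).filter (fun p => p.1 < p.2) := by
        apply Finset.filter_congr
        intro p _
        simp [hab]
      rw [heq]
      have h1 := two_mul_card_filter_lt (blockF m n t)
      have h2 := cliqPairCount_spec a b m hab
      rw [hbc] at h1
      omega
    · have heq : ((blockF m n t).offDiag).filter (fun p => a = b → p.1 < p.2)
          = (blockF m n t).offDiag := by
        apply Finset.filter_true_of_mem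
        intro p _
        exact fun h => absurd h hab
      rw [heq, Finset.offDiag_card, hbc]
      unfold cliqPairCount
      rw [if_neg hab]
  · intro t ht t' ht' hne
    simp only [Function.onFun]
    rw [Finset.disjoint_left]
    intro p hp hp'
    simp only [Finset.mem_filter, Finset.mem_offDiag, mem_blockF] at hp hp'
    exact hne (hp.1.1 ▸ hp'.1.1 ▸ rfl)

/-! ### The bipartite construction -/

def bipGraph (d n : ℕ) : SimpleGraph (Fin n) where
  Adj x y := x.val / (2*d) = y.val / (2*d) ∧
    ((x.val % (2*d) < d ∧ d ≤ y.val % (2*d)) ∨ (y.val % (2*d) < d ∧ d ≤ x.val % (2*d)))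
  symm := ⟨by rintro x y ⟨h1, h2⟩; exact ⟨h1.symm, by tauto⟩⟩
  loopless := ⟨by rintro x ⟨-, h⟩; omega⟩

def bipLo (d n : ℕ) (w : Fin n) : ℕ :=
  (w.val / (2*d)) * (2*d) + (if w.val % (2*d) < d then d else 0)

lemma bipGraph_adj_iff {d n : ℕ} (hd : 0 < d) (w y : Fin n) :
    (bipGraph d n).Adj w y ↔ (bipLo d n w ≤ y.val ∧ y.val < bipLo d n w + d) := by
  have h2d : 0 < 2*d := by omega
  constructor
  · rintro ⟨hblock, hside⟩
    have hy := div_mod_char h2d hblock.symm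
    have hw := div_mod_char h2d (rfl : w.val / (2*d) = w.val / (2*d))
    unfold bipLo
    rcases hside with ⟨h1, h2⟩ | ⟨h1, h2⟩
    · rw [if_pos h1]; omega
    · rw [if_neg (by omega)]; omega
  · intro h
    unfold bipLo at h
    have hw := div_mod_char h2d (rfl : w.val / (2*d) = w.val / (2*d))
    by_cases hs : w.val % (2*d) < d
    · rw [if_pos hs] at h
      have hyd : y.val / (2*d) = w.val / (2*d) := div_of_bounds h2d (by omega) (by omega)
      have hy := div_mod_char h2d hyd
      exact ⟨hyd.symm, Or.inl ⟨hs, by omega⟩⟩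
    · rw [if_neg hs] at h
      have hyd : y.val / (2*d) = w.val / (2*d) := div_of_bounds h2d (by omega) (by omega)
      have hy := div_mod_char h2d hyd
      exact ⟨hyd.symm, Or.inr ⟨by omega, by omega⟩⟩

lemma bipGraph_nbhd_eq {d n : ℕ} (hd : 0 < d) (w : Fin n) [DecidableRel (bipGraph d n).Adj] :
    (Finset.univ.filter fun y => (bipGraph d n).Adj w y)
      = Finset.univ.filter (fun y => bipLo d n w ≤ y.val ∧ y.val < bipLo d n w + d) := by
  ext y
  simp only [Finset.mem_filter, Finset.mem_univ, true_and]
  exact bipGraph_adj_iff hd w y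

lemma bipGraph_nbhd_card_le {d n : ℕ} (hd : 0 < d) (w : Fin n)
    [DecidableRel (bipGraph d n).Adj] :
    (Finset.univ.filter fun y => (bipGraph d n).Adj w y).card ≤ d := by
  rw [bipGraph_nbhd_eq hd w]
  exact interval_card_le n _ d

lemma bipGraph_nbhd_card_eq {d n : ℕ} (hd : 0 < d) (w : Fin n)
    [DecidableRel (bipGraph d n).Adj]
    (hfull : (w.val / (2*d) + 1) * (2*d) ≤ n) :
    (Finset.univ.filter fun y => (bipGraph d n).Adj w y).card = d := by
  rw [bipGraph_nbhd_eq hd w]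
  apply interval_card_eq
  have h1 := Nat.add_mul (w.val / (2*d)) 1 (2*d)
  have h2 := Nat.one_mul (2*d)
  have h3 : bipLo d n w ≤ (w.val / (2*d)) * (2*d) + d := by
    unfold bipLo
    split_ifs <;> omega
  omega

lemma bipGraph_free (c d n : ℕ) (hc : 0 < c) (hd : 0 < d) :
    ¬ Contains (doubleStar c d) (bipGraph d n) := by
  classical
  rintro ⟨f, hf⟩
  set one : Fin (c + d + 2) := ⟨1, by omega⟩ with hone
  have hone1 : one.val = 1 := rfl
  have hN : (Finset.univ.filter fun y => (doubleStar c d).Adj one y).card = d + 1 := by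
    have heq : (Finset.univ.filter fun y => (doubleStar c d).Adj one y)
        = Finset.univ.filter (fun y : Fin (c + d + 2) => y.val = 0 ∨ c + 2 ≤ y.val) := by
      ext y
      simp only [Finset.mem_filter, Finset.mem_univ, true_and, doubleStar_adj, hone1, and_true,
        false_and, and_false, or_false, false_or]
      have := y.isLt
      omega
    rw [heq]
    have key : (Finset.univ.filter (fun y : Fin (c + d + 2) => y.val = 0 ∨ c + 2 ≤ y.val)).card
        = (Finset.range (d + 1)).card := by
      apply Finset.card_bij' (i := fun y _ => if y.val = 0 then 0 else y.val - (c + 1))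
        (j := fun i hi => (⟨if i = 0 then 0 else c + 1 + i, by
          simp only [Finset.mem_range] at hi; split_ifs <;> omega⟩ : Fin (c + d + 2)))
      all_goals intro x hx
      all_goals simp only [Finset.mem_filter, Finset.mem_univ, true_and, Finset.mem_range,
        Fin.ext_iff, Fin.val_mk] at hx ⊢
      all_goals split_ifs <;> simp_all <;> omega
    rw [key, Finset.card_range]
  have himg : (Finset.univ.filter fun y => (doubleStar c d).Adj one y).image f
      ⊆ Finset.univ.filter fun z => (bipGraph d n).Adj (f one) z := by
    intro z hz
    simp only [Finset.mem_image, Finset.mem_filter, Finset.mem_univ, true_and] at hz ⊢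
    obtain ⟨y, hy, rfl⟩ := hz
    exact f.map_adj hy
  have hc1 : d + 1 ≤ (Finset.univ.filter fun z => (bipGraph d n).Adj (f one) z).card := by
    calc d + 1 = ((Finset.univ.filter fun y => (doubleStar c d).Adj one y).image f).card := by
          rw [Finset.card_image_of_injective _ hf, hN]
      _ ≤ _ := Finset.card_le_card himg
  have hc2 := bipGraph_nbhd_card_le hd (f one) (n := n)
  omega

def bipSide (d n t : ℕ) (right : Bool) : Finset (Fin n) :=
  Finset.univ.filter fun y => y.val / (2*d) = t ∧
    (if right then d ≤ y.val % (2*d) else y.val % (2*d) < d)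

lemma bipSide_card {d n t : ℕ} (hd : 0 < d) (right : Bool) (hfull : (t + 1) * (2*d) ≤ n) :
    (bipSide d n t right).card = d := by
  have h2d : 0 < 2*d := by omega
  have heq : bipSide d n t right = Finset.univ.filter
      (fun y : Fin n => t * (2*d) + (if right then d else 0) ≤ y.val ∧
        y.val < (t * (2*d) + (if right then d else 0)) + d) := by
    unfold bipSide
    ext y
    simp only [Finset.mem_filter, Finset.mem_univ, true_and]
    constructor
    · rintro ⟨h1, h2⟩
      have hy := div_mod_char h2d h1
      rcases right <;> simp only [if_true, if_false, Bool.false_eq_true] at h2 ⊢ <;> omega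
    · intro h
      have hyd : y.val / (2*d) = t := div_of_bounds h2d (by rcases right <;>
        simp only [if_true, if_false, Bool.false_eq_true] at h <;> omega) (by rcases right <;>
        simp only [if_true, if_false, Bool.false_eq_true] at h <;> omega)
      have hy := div_mod_char h2d hyd
      refine ⟨hyd, ?_⟩
      rcases right <;> simp only [if_true, if_false, Bool.false_eq_true] at h ⊢ <;> omega
  rw [heq]
  apply interval_card_eq
  have h1 := Nat.add_mul t 1 (2*d)
  have h2 := Nat.one_mul (2*d)
  split_ifs <;> omega

def bipPairCount (a b d : ℕ) : ℕ := if a = b then d * d else 2 * (d * d)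

def bipPairs (a b d n : ℕ) : Finset (Fin n × Fin n) :=
  (Finset.range (n / (2*d))).biUnion fun t =>
    (bipSide d n t false ×ˢ bipSide d n t true) ∪
      (if a = b then ∅ else bipSide d n t true ×ˢ bipSide d n t false)

lemma mem_bipSide {d n t : ℕ} {y : Fin n} {right : Bool} :
    y ∈ bipSide d n t right ↔ (y.val / (2*d) = t ∧
      (if right then d ≤ y.val % (2*d) else y.val % (2*d) < d)) := by
  unfold bipSide
  simp

lemma bipPairs_card (a b d n : ℕ) (hd : 0 < d) :
    (bipPairs a b d n).card = (n / (2*d)) * bipPairCount a b d := by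
  unfold bipPairs
  rw [Finset.card_biUnion]
  · rw [Finset.sum_congr rfl (fun t ht => ?_), Finset.sum_const, smul_eq_mul,
      Finset.card_range]
    have hfull : (t + 1) * (2*d) ≤ n := by
      simp only [Finset.mem_range] at ht
      have h1 : t + 1 ≤ n / (2*d) := by omega
      have h2 := Nat.mul_le_mul_right (2*d) h1
      have h3 := Nat.div_mul_le_self n (2*d)
      omega
    have hdisj : Disjoint (bipSide d n t false ×ˢ bipSide d n t true)
        (if a = b then (∅ : Finset (Fin n × Fin n))
          else bipSide d n t true ×ˢ bipSide d n t false) := by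
      split_ifs
      · exact Finset.disjoint_empty_right _
      · rw [Finset.disjoint_left]
        rintro p hp hp'
        simp only [Finset.mem_product, mem_bipSide] at hp hp'
        have h1 := hp.1.2
        have h2 := hp'.1.2
        simp only [if_true, if_false, Bool.false_eq_true] at h1 h2
        omega
    rw [Finset.card_union_of_disjoint hdisj, Finset.card_product,
      bipSide_card hd false hfull, bipSide_card hd true hfull]
    unfold bipPairCount
    split_ifs
    · simp
    · rw [Finset.card_product, bipSide_card hd false hfull, bipSide_card hd true hfull]
      ring
  · intro t ht t' ht' hne
    simp only [Function.onFun]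
    rw [Finset.disjoint_left]
    intro p hp hp'
    have key : ∀ {s : ℕ}, p ∈ (bipSide d n s false ×ˢ bipSide d n s true) ∪
        (if a = b then ∅ else bipSide d n s true ×ˢ bipSide d n s false) →
        p.1.val / (2*d) = s := by
      intro s hs
      rcases Finset.mem_union.1 hs with h | h
      · exact (mem_bipSide.1 (Finset.mem_product.1 h).1).1
      · split_ifs at h
        · simp at h
        · exact (mem_bipSide.1 (Finset.mem_product.1 h).1).1
    exact hne ((key hp) ▸ (key hp') ▸ rfl)

/-! ### Instantiation of the counting lemma -/

lemma mem_cliquePairs {a b m n : ℕ} {p : Fin n × Fin n} (hp : p ∈ cliquePairs a b m n) :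
    p.1.val / m < n / m ∧ p.2.val / m = p.1.val / m ∧ p.1 ≠ p.2 ∧ (a = b → p.1 < p.2) := by
  unfold cliquePairs at hp
  simp only [Finset.mem_biUnion, Finset.mem_range, Finset.mem_filter, Finset.mem_offDiag,
    mem_blockF] at hp
  obtain ⟨t, ht, ⟨⟨h1, h2, h3⟩, h4⟩⟩ := hp
  exact ⟨h1 ▸ ht, by rw [h1, h2], h3, h4⟩

lemma cliqueGraph_adj_def {m n : ℕ} {x y : Fin n} :
    (cliqueGraph m n).Adj x y ↔ (x ≠ y ∧ x.val / m = y.val / m) := Iff.rfl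

lemma clique_data_bound (a b m n : ℕ) (hm : 0 < m) :
    ((n / m) * cliqPairCount a b m) * ((m - 2).choose a * (m - 2 - a).choose b)
      ≤ (dataFinset a b (cliqueGraph m n)).card := by
  classical
  rw [← cliquePairs_card a b m n hm]
  apply count_le_dataFinset a b (cliqueGraph m n) (cliquePairs a b m n)
    (fun p => (blockF m n (p.1.val / m)) \ {p.1, p.2})
    (fun p A => ((blockF m n (p.1.val / m)) \ {p.1, p.2}) \ A) (m - 2) (m - 2 - a)
  · intro p hp
    obtain ⟨ht, hblk, hne, hlt⟩ := mem_cliquePairs hp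
    exact ⟨⟨hne, hblk.symm⟩, hlt⟩
  · intro p hp x hx
    rw [Finset.mem_sdiff] at hx
    obtain ⟨hxb, hxn⟩ := hx
    simp only [Finset.mem_insert, Finset.mem_singleton, not_or] at hxn
    exact ⟨⟨fun h => hxn.1 h.symm, (mem_blockF.1 hxb).symm⟩, hxn.2⟩
  · intro p hp A hAs y hy
    obtain ⟨ht, hblk, hne, hlt⟩ := mem_cliquePairs hp
    rw [Finset.mem_sdiff, Finset.mem_sdiff] at hy
    obtain ⟨⟨hyb, hyn⟩, hyA⟩ := hy
    simp only [Finset.mem_insert, Finset.mem_singleton, not_or] at hyn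
    exact ⟨⟨fun h => hyn.2 h.symm, by rw [hblk, (mem_blockF.1 hyb)]⟩, hyn.1, hyA⟩
  · intro p hp
    obtain ⟨ht, hblk, hne, hlt⟩ := mem_cliquePairs hp
    have hfull : (p.1.val / m + 1) * m ≤ n := by
      have h1 : p.1.val / m + 1 ≤ n / m := by omega
      have h2 := Nat.mul_le_mul_right m h1
      have h3 := Nat.div_mul_le_self n m
      omega
    have hsub : {p.1, p.2} ⊆ blockF m n (p.1.val / m) := by
      intro x hx
      simp only [Finset.mem_insert, Finset.mem_singleton] at hx
      rcases hx with rfl | rfl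
      · exact mem_blockF.2 rfl
      · exact mem_blockF.2 hblk
    rw [Finset.card_sdiff_of_subset hsub, blockF_card_eq m n _ hm hfull,
      Finset.card_insert_of_notMem (by simp [hne]), Finset.card_singleton]
  · intro p hp A hAsub hAcard
    obtain ⟨ht, hblk, hne, hlt⟩ := mem_cliquePairs hp
    have hfull : (p.1.val / m + 1) * m ≤ n := by
      have h1 : p.1.val / m + 1 ≤ n / m := by omega
      have h2 := Nat.mul_le_mul_right m h1
      have h3 := Nat.div_mul_le_self n m
      omega
    have hsub : {p.1, p.2} ⊆ blockF m n (p.1.val / m) := by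
      intro x hx
      simp only [Finset.mem_insert, Finset.mem_singleton] at hx
      rcases hx with rfl | rfl
      · exact mem_blockF.2 rfl
      · exact mem_blockF.2 hblk
    rw [Finset.card_sdiff_of_subset hAsub, hAcard, Finset.card_sdiff_of_subset hsub,
      blockF_card_eq m n _ hm hfull,
      Finset.card_insert_of_notMem (by simp [hne]), Finset.card_singleton]

lemma bipGraph_adj_def {d n : ℕ} {x y : Fin n} :
    (bipGraph d n).Adj x y ↔ (x.val / (2*d) = y.val / (2*d) ∧
      ((x.val % (2*d) < d ∧ d ≤ y.val % (2*d)) ∨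
        (y.val % (2*d) < d ∧ d ≤ x.val % (2*d)))) := Iff.rfl

lemma mem_bipPairs {a b d n : ℕ} {p : Fin n × Fin n} (hp : p ∈ bipPairs a b d n) :
    p.1.val / (2*d) < n / (2*d) ∧ p.2.val / (2*d) = p.1.val / (2*d) ∧
      ((p.1.val % (2*d) < d ∧ d ≤ p.2.val % (2*d)) ∨
        (a ≠ b ∧ d ≤ p.1.val % (2*d) ∧ p.2.val % (2*d) < d)) := by
  unfold bipPairs at hp
  simp only [Finset.mem_biUnion, Finset.mem_range, Finset.mem_union, Finset.mem_product,
    mem_bipSide] at hp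
  obtain ⟨t, ht, h⟩ := hp
  rcases h with ⟨⟨h11, h12⟩, h21, h22⟩ | h
  · simp only [Bool.false_eq_true, if_false, if_true] at h12 h22
    exact ⟨h11 ▸ ht, by rw [h21, h11], Or.inl ⟨h12, h22⟩⟩
  · by_cases hab : a = b
    · rw [if_pos hab] at h
      simp at h
    · rw [if_neg hab] at h
      simp only [Finset.mem_product, mem_bipSide] at h
      obtain ⟨⟨h11, h12⟩, h21, h22⟩ := h
      simp only [Bool.false_eq_true, if_false, if_true] at h12 h22
      exact ⟨h11 ▸ ht, by rw [h21, h11], Or.inr ⟨hab, h12, h22⟩⟩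

lemma bip_data_bound (a b d n : ℕ) (hd : 0 < d) :
    ((n / (2*d)) * bipPairCount a b d) * ((d - 1).choose a * (d - 1).choose b)
      ≤ (dataFinset a b (bipGraph d n)).card := by
  classical
  rw [← bipPairs_card a b d n hd]
  apply count_le_dataFinset a b (bipGraph d n) (bipPairs a b d n)
    (fun p => (Finset.univ.filter fun y => (bipGraph d n).Adj p.1 y) \ {p.2})
    (fun p A => (Finset.univ.filter fun y => (bipGraph d n).Adj p.2 y) \ {p.1})
    (d - 1) (d - 1)
  · intro p hp
    obtain ⟨ht, hblk, hside⟩ := mem_bipPairs hp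
    have h2d : 0 < 2*d := by omega
    have h1 := div_mod_char h2d (rfl : p.1.val / (2*d) = p.1.val / (2*d))
    have h2 := div_mod_char h2d hblk
    constructor
    · rw [bipGraph_adj_def]
      refine ⟨hblk.symm, ?_⟩
      rcases hside with ⟨ha1, ha2⟩ | ⟨-, ha1, ha2⟩
      · exact Or.inl ⟨ha1, ha2⟩
      · exact Or.inr ⟨ha2, ha1⟩
    · intro hab
      rcases hside with ⟨ha1, ha2⟩ | ⟨hne, -⟩
      · rw [Fin.lt_def]
        omega
      · exact absurd hab hne
  · intro p hp x hx
    rw [Finset.mem_sdiff, Finset.mem_filter] at hx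
    exact ⟨hx.1.2, by simpa using hx.2⟩
  · intro p hp A hAsub y hy
    obtain ⟨ht, hblk, hside⟩ := mem_bipPairs hp
    rw [Finset.mem_sdiff, Finset.mem_filter] at hy
    refine ⟨hy.1.2, by simpa using hy.2, ?_⟩
    intro hyA
    have h1 : (bipGraph d n).Adj p.1 y := by
      have := hAsub hyA
      rw [Finset.mem_sdiff, Finset.mem_filter] at this
      exact this.1.2
    have h2 : (bipGraph d n).Adj p.2 y := hy.1.2
    rw [bipGraph_adj_def] at h1 h2
    rcases hside with ⟨ha1, ha2⟩ | ⟨-, ha1, ha2⟩ <;> omega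
  · intro p hp
    obtain ⟨ht, hblk, hside⟩ := mem_bipPairs hp
    have hfull : (p.1.val / (2*d) + 1) * (2*d) ≤ n := by
      have h1 : p.1.val / (2*d) + 1 ≤ n / (2*d) := by omega
      have h2 := Nat.mul_le_mul_right (2*d) h1
      have h3 := Nat.div_mul_le_self n (2*d)
      omega
    have hadj : (bipGraph d n).Adj p.1 p.2 := by
      rw [bipGraph_adj_def]
      refine ⟨hblk.symm, ?_⟩
      rcases hside with ⟨ha1, ha2⟩ | ⟨-, ha1, ha2⟩
      · exact Or.inl ⟨ha1, ha2⟩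
      · exact Or.inr ⟨ha2, ha1⟩
    rw [Finset.card_sdiff_of_subset (by simp [hadj]), bipGraph_nbhd_card_eq hd p.1 hfull,
      Finset.card_singleton]
  · intro p hp A hAsub hAcard
    obtain ⟨ht, hblk, hside⟩ := mem_bipPairs hp
    have hfull : (p.2.val / (2*d) + 1) * (2*d) ≤ n := by
      rw [hblk]
      have h1 : p.1.val / (2*d) + 1 ≤ n / (2*d) := by omega
      have h2 := Nat.mul_le_mul_right (2*d) h1
      have h3 := Nat.div_mul_le_self n (2*d)
      omega
    have hadj : (bipGraph d n).Adj p.2 p.1 := by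
      rw [bipGraph_adj_def]
      refine ⟨hblk, ?_⟩
      rcases hside with ⟨ha1, ha2⟩ | ⟨-, ha1, ha2⟩
      · exact Or.inr ⟨ha1, ha2⟩
      · exact Or.inl ⟨ha2, ha1⟩
    rw [Finset.card_sdiff_of_subset (by simp [hadj]), bipGraph_nbhd_card_eq hd p.2 hfull,
      Finset.card_singleton]

/-! ### exGen lower bounds -/

lemma copyCount_le_bound {α : Type*} (H : SimpleGraph α) {n : ℕ} (G : SimpleGraph (Fin n)) :
    copyCount H G ≤ Nat.card (Set (Fin n) × (Fin n → Fin n → Prop)) := by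
  unfold _root_.copyCount
  rw [← Nat.card_coe_set_eq]
  calc Nat.card {G' : G.Subgraph | Nonempty (H ≃g G'.coe)}
      ≤ Nat.card G.Subgraph :=
        Nat.card_le_card_of_injective Subtype.val Subtype.val_injective
    _ ≤ _ := Nat.card_le_card_of_injective (fun G' => (G'.verts, G'.Adj))
        (fun x y h => SimpleGraph.Subgraph.ext (congrArg Prod.fst h) (congrArg Prod.snd h))

lemma le_exGen {α β : Type*} {n : ℕ} (H : SimpleGraph α) (F : SimpleGraph β)
    (G : SimpleGraph (Fin n)) (hfree : ¬ Contains F G) :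
    copyCount H G ≤ exGen n H F := by
  apply le_csSup
  · refine ⟨Nat.card (Set (Fin n) × (Fin n → Fin n → Prop)), ?_⟩
    rintro N ⟨G', -, rfl⟩
    exact copyCount_le_bound H G'
  · exact ⟨G, hfree, rfl⟩

lemma final_calc (r : ℝ) (hr0 : 0 ≤ r) (m P : ℕ) (hm : 0 < m) (hP : r * m ≤ (P : ℝ))
    (E : ℕ → ℕ) (hE : ∀ n, (n / m) * P ≤ E n) :
    ∀ n : ℕ, 0 < n → r * n - r * m ≤ (E n : ℝ) := by
  intro n hn
  have hq : ((n / m : ℕ) : ℝ) * m ≥ (n : ℝ) - m := by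
    have h1 := Nat.div_add_mod n m
    have h2 := Nat.mod_lt n hm
    have h3 : (m : ℝ) * ((n / m : ℕ) : ℝ) + ((n % m : ℕ) : ℝ) = (n : ℝ) := by
      exact_mod_cast h1
    nlinarith [h3, (by exact_mod_cast h2 : ((n % m : ℕ) : ℝ) < (m : ℝ))]
  have h3 : (((n / m) * P : ℕ) : ℝ) ≤ (E n : ℝ) := by exact_mod_cast hE n
  have hnn : (0 : ℝ) ≤ ((n / m : ℕ) : ℝ) := by positivity
  calc r * n - r * m = r * ((n : ℝ) - m) := by ring
    _ ≤ r * (((n / m : ℕ) : ℝ) * m) := by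
        apply mul_le_mul_of_nonneg_left hq hr0
    _ = ((n / m : ℕ) : ℝ) * (r * m) := by ring
    _ ≤ ((n / m : ℕ) : ℝ) * P := mul_le_mul_of_nonneg_left hP hnn
    _ = (((n / m) * P : ℕ) : ℝ) := by push_cast; ring
    _ ≤ (E n : ℝ) := h3

/-- for `c ≤ a ≤ b < d`, there is `k` with `ex(n, S_{a,b}, S_{c,d}) ≥ r·n - k`. -/
theorem exGen_doubleStar_doubleStar_lower (a b c d : ℕ) (hc : 0 < c)
    (hca : c ≤ a) (hab : a ≤ b) (hbd : b < d) (r : ℝ)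
    (hr : r = if a = b
      then max ((((c : ℝ) + d) / 2) * ((c + d - 1).choose a) * ((c + d - 1 - a).choose b))
               (((d : ℝ) / 2) * ((d - 1).choose a) * ((d - 1).choose b))
      else max (((c : ℝ) + d) * ((c + d - 1).choose a) * ((c + d - 1 - a).choose b))
               ((d : ℝ) * ((d - 1).choose a) * ((d - 1).choose b))) :
    ∃ k : ℝ, ∀ n : ℕ, 0 < n →
      r * n - k ≤ (exGen n (doubleStar a b) (doubleStar c d) : ℝ) := by
  have ha : 1 ≤ a := le_trans hc hca
  have hd : 0 < d := by omega
  have hm1 : 0 < c + d + 1 := by omega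
  have hm2 : 0 < 2 * d := by omega
  have hE1 : ∀ n : ℕ, (n / (c + d + 1)) * (cliqPairCount a b (c + d + 1) *
      ((c + d - 1).choose a * (c + d - 1 - a).choose b))
      ≤ exGen n (doubleStar a b) (doubleStar c d) := by
    intro n
    have h1 := clique_data_bound a b (c + d + 1) n hm1
    rw [show c + d + 1 - 2 = c + d - 1 by omega] at h1
    have h2 : (dataFinset a b (cliqueGraph (c + d + 1) n)).card
        ≤ _root_.copyCount (doubleStar a b) (cliqueGraph (c + d + 1) n) :=
      dataFinset_card_le_copyCount a b ha hab (cliqueGraph (c + d + 1) n)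
    have h3 := le_exGen (doubleStar a b) (doubleStar c d) (cliqueGraph (c + d + 1) n)
      (cliqueGraph_free c d (c + d + 1) n hm1 (le_refl _))
    calc (n / (c + d + 1)) * (cliqPairCount a b (c + d + 1) *
          ((c + d - 1).choose a * (c + d - 1 - a).choose b))
        = ((n / (c + d + 1)) * cliqPairCount a b (c + d + 1)) *
          ((c + d - 1).choose a * (c + d - 1 - a).choose b) := by ring
      _ ≤ (dataFinset a b (cliqueGraph (c + d + 1) n)).card := h1
      _ ≤ _root_.copyCount (doubleStar a b) (cliqueGraph (c + d + 1) n) := h2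
      _ ≤ exGen n (doubleStar a b) (doubleStar c d) := h3
  have hE2 : ∀ n : ℕ, (n / (2 * d)) * (bipPairCount a b d *
      ((d - 1).choose a * (d - 1).choose b))
      ≤ exGen n (doubleStar a b) (doubleStar c d) := by
    intro n
    have h1 := bip_data_bound a b d n hd
    have h2 : (dataFinset a b (bipGraph d n)).card
        ≤ _root_.copyCount (doubleStar a b) (bipGraph d n) :=
      dataFinset_card_le_copyCount a b ha hab (bipGraph d n)
    have h3 := le_exGen (doubleStar a b) (doubleStar c d) (bipGraph d n)
      (bipGraph_free c d n hc hd)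
    calc (n / (2 * d)) * (bipPairCount a b d * ((d - 1).choose a * (d - 1).choose b))
        = ((n / (2 * d)) * bipPairCount a b d) * ((d - 1).choose a * (d - 1).choose b) := by
          ring
      _ ≤ (dataFinset a b (bipGraph d n)).card := h1
      _ ≤ _root_.copyCount (doubleStar a b) (bipGraph d n) := h2
      _ ≤ exGen n (doubleStar a b) (doubleStar c d) := h3
  by_cases habq : a = b
  · rw [if_pos habq] at hr
    have hY0 : (0 : ℝ) ≤ ((d : ℝ) / 2) * ((d - 1).choose a) * ((d - 1).choose b) := by
      positivity
    have hr0 : 0 ≤ r := by rw [hr]; exact le_trans hY0 (le_max_right _ _)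
    rcases le_total ((((c : ℝ) + d) / 2) * ((c + d - 1).choose a) * ((c + d - 1 - a).choose b))
        (((d : ℝ) / 2) * ((d - 1).choose a) * ((d - 1).choose b)) with hmax | hmax
    · -- bipartite construction
      have hrY : r = ((d : ℝ) / 2) * ((d - 1).choose a) * ((d - 1).choose b) := by
        rw [hr, max_eq_right hmax]
      refine ⟨r * ((2 * d : ℕ) : ℝ), final_calc r hr0 (2 * d)
        (bipPairCount a b d * ((d - 1).choose a * (d - 1).choose b)) hm2 ?_ _ hE2⟩
      have hpc : ((bipPairCount a b d * ((d - 1).choose a * (d - 1).choose b) : ℕ) : ℝ)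
          = (d : ℝ) * d * (((d - 1).choose a : ℝ) * ((d - 1).choose b : ℝ)) := by
        unfold bipPairCount
        rw [if_pos habq]
        push_cast
        ring
      apply le_of_eq
      rw [hrY, hpc]
      push_cast
      ring
    · -- clique construction
      have hrX : r = (((c : ℝ) + d) / 2) * ((c + d - 1).choose a) *
          ((c + d - 1 - a).choose b) := by
        rw [hr, max_eq_left hmax]
      refine ⟨r * ((c + d + 1 : ℕ) : ℝ), final_calc r hr0 (c + d + 1)
        (cliqPairCount a b (c + d + 1) * ((c + d - 1).choose a * (c + d - 1 - a).choose b))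
        hm1 ?_ _ hE1⟩
      have hspec := cliqPairCount_spec a b (c + d + 1) habq
      have hmle : c + d + 1 ≤ (c + d + 1) * (c + d + 1) :=
        Nat.le_mul_of_pos_left (c + d + 1) hm1
      have hcast : 2 * ((cliqPairCount a b (c + d + 1) : ℕ) : ℝ)
          = ((c : ℝ) + d + 1) * ((c : ℝ) + d + 1) - ((c : ℝ) + d + 1) := by
        have h5 : ((2 * cliqPairCount a b (c + d + 1) : ℕ) : ℝ)
            = (((c + d + 1) * (c + d + 1) - (c + d + 1) : ℕ) : ℝ) := by
          exact_mod_cast congrArg (Nat.cast : ℕ → ℝ) hspec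
        rw [Nat.cast_sub hmle] at h5
        push_cast at h5
        push_cast
        linarith
      apply le_of_eq
      rw [hrX]
      push_cast
      linear_combination (-((c + d - 1).choose a : ℝ) * ((c + d - 1 - a).choose b : ℝ) / 2)
        * hcast
  · rw [if_neg habq] at hr
    have hY0 : (0 : ℝ) ≤ (d : ℝ) * ((d - 1).choose a) * ((d - 1).choose b) := by positivity
    have hr0 : 0 ≤ r := by rw [hr]; exact le_trans hY0 (le_max_right _ _)
    rcases le_total (((c : ℝ) + d) * ((c + d - 1).choose a) * ((c + d - 1 - a).choose b))
        ((d : ℝ) * ((d - 1).choose a) * ((d - 1).choose b)) with hmax | hmax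
    · have hrY : r = (d : ℝ) * ((d - 1).choose a) * ((d - 1).choose b) := by
        rw [hr, max_eq_right hmax]
      refine ⟨r * ((2 * d : ℕ) : ℝ), final_calc r hr0 (2 * d)
        (bipPairCount a b d * ((d - 1).choose a * (d - 1).choose b)) hm2 ?_ _ hE2⟩
      have hpc : ((bipPairCount a b d * ((d - 1).choose a * (d - 1).choose b) : ℕ) : ℝ)
          = 2 * ((d : ℝ) * d) * (((d - 1).choose a : ℝ) * ((d - 1).choose b : ℝ)) := by
        unfold bipPairCount
        rw [if_neg habq]
        push_cast
        ring
      apply le_of_eq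
      rw [hrY, hpc]
      push_cast
      ring
    · have hrX : r = ((c : ℝ) + d) * ((c + d - 1).choose a) * ((c + d - 1 - a).choose b) := by
        rw [hr, max_eq_left hmax]
      refine ⟨r * ((c + d + 1 : ℕ) : ℝ), final_calc r hr0 (c + d + 1)
        (cliqPairCount a b (c + d + 1) * ((c + d - 1).choose a * (c + d - 1 - a).choose b))
        hm1 ?_ _ hE1⟩
      have hmle : c + d + 1 ≤ (c + d + 1) * (c + d + 1) :=
        Nat.le_mul_of_pos_left (c + d + 1) hm1
      have hspec : cliqPairCount a b (c + d + 1)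
          = (c + d + 1) * (c + d + 1) - (c + d + 1) := by
        unfold cliqPairCount; rw [if_neg habq]
      have hcast : ((cliqPairCount a b (c + d + 1) : ℕ) : ℝ)
          = ((c : ℝ) + d + 1) * ((c : ℝ) + d + 1) - ((c : ℝ) + d + 1) := by
        rw [hspec, Nat.cast_sub hmle]
        push_cast
        ring
      apply le_of_eq
      rw [hrX]
      push_cast
      linear_combination (-((c + d - 1).choose a : ℝ) * ((c + d - 1 - a).choose b : ℝ))
        * hcast
end inj
end
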